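/- arXiv:2010.10494 — 5 statements merged into one kernel-verified Lean document; each statement's English description precedes it below -/
import Mathlib

section
/- For every integer m ≥ 3 the (m,1) secure decentralized pliable index coding problem with circular side information is not linearly feasible: for every length ℓ and every decentralized linear code G of length ℓ for parameters (m, s = 1), G is not simultaneously correct and secure. -/
namespace SDPicod

/-- Side information set of user `i`: the `s` cyclically consecutive message
indices ending at `i`, i.e. `{i - k : k ∈ Finset.range s}`. -/
def sideInfo (m s : ℕ) (i : ZMod m) : Set (ZMod m) :=
  {j | ∃ k ∈ Finset.range s, j = i - (k : ZMod m)}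

/-- A decentralized linear code: every row is encodable by some user, i.e.
its support is contained in that user's side information set. -/
def IsDecentralizedCode (m s : ℕ) {ℓ : ℕ} (G : Fin ℓ → ZMod m → ZMod 2) : Prop :=
  ∀ t : Fin ℓ, ∃ i : ZMod m, Function.support (G t) ⊆ sideInfo m s i

/-- The set of message indices user `i` can decode: indices `j` outside the
side information set such that the standard basis vector `e j` lies in the
`GF(2)`-span of the rows of `G` together with the basis vectors of the
side information set. -/
def decSet (m s : ℕ) {ℓ : ℕ} (G : Fin ℓ → ZMod m → ZMod 2) (i : ZMod m) :
    Set (ZMod m) :=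
  {j | j ∉ sideInfo m s i ∧
    Pi.single j (1 : ZMod 2) ∈ Submodule.span (ZMod 2)
      (Set.range G ∪ {v | ∃ k ∈ sideInfo m s i, v = Pi.single k (1 : ZMod 2)})}

/-- Correctness: every user can decode at least one new message. -/
def Correct (m s : ℕ) {ℓ : ℕ} (G : Fin ℓ → ZMod m → ZMod 2) : Prop :=
  ∀ i : ZMod m, (decSet m s G i).Nonempty

/-- Security: no user can decode more than one new message. -/
def Secure (m s : ℕ) {ℓ : ℕ} (G : Fin ℓ → ZMod m → ZMod 2) : Prop :=
  ∀ i : ZMod m, (decSet m s G i).Subsingleton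

end SDPicod

open SDPicod

theorem infeasible_s_eq_one (m : ℕ) (hm : 3 ≤ m)
    (ℓ : ℕ) (G : Fin ℓ → ZMod m → ZMod 2)
    (hG : IsDecentralizedCode m 1 G) :
    ¬ (Correct m 1 G ∧ Secure m 1 G) := by
  rintro ⟨hC, hS⟩
  haveI : NeZero m := ⟨by omega⟩
  have h2 : ∀ a : ZMod 2, a ≠ 0 → a = 1 := by decide
  have hside : ∀ i : ZMod m, sideInfo m 1 i = {i} := by
    intro i
    ext j
    simp [sideInfo]
  set K : Set (ZMod m) := {j | ∃ t, G t j ≠ 0} with hK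
  have hdec : ∀ i, decSet m 1 G i = K \ {i} := by
    intro i
    ext j
    constructor
    · rintro ⟨hj1, hj2⟩
      rw [hside] at hj1
      refine ⟨?_, hj1⟩
      by_contra hjK
      have hz : (Pi.single j 1 : ZMod m → ZMod 2) j = 0 := by
        refine Submodule.span_induction (p := fun (v : ZMod m → ZMod 2) _ => v j = 0) ?_ rfl ?_ ?_ hj2
        · rintro v (⟨t, rfl⟩ | ⟨k, hk, rfl⟩)
          · by_contra h; exact hjK ⟨t, h⟩
          · rw [hside] at hk
            simp only [Set.mem_singleton_iff] at hk; subst hk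
            exact Pi.single_eq_of_ne (fun h => hj1 (by simp [h])) 1
        · intro x y _ _ hx hy; simp [hx, hy]
        · intro c x _ hx; simp [hx]
      simp at hz
    · rintro ⟨⟨t, ht⟩, hji⟩
      simp only [Set.mem_singleton_iff] at hji
      refine ⟨by rw [hside]; exact hji, ?_⟩
      obtain ⟨i', hi'⟩ := hG t
      rw [hside] at hi'
      have hji' : j = i' := hi' (Function.mem_support.mpr ht)
      have hGt : G t = Pi.single j 1 := by
        funext x
        by_cases hx : x = j
        · subst hx
          rw [Pi.single_eq_same]
          exact h2 _ ht
        · rw [Pi.single_eq_of_ne hx]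
          by_contra hx0
          exact hx ((hi' hx0).trans hji'.symm)
      rw [← hGt]
      exact Submodule.subset_span (Or.inl ⟨t, rfl⟩)
  have hKi : ∀ i : ZMod m, ∃ j, j ∈ K ∧ j ≠ i := by
    intro i
    obtain ⟨j, hj⟩ := hC i
    rw [hdec] at hj
    exact ⟨j, hj.1, hj.2⟩
  obtain ⟨j0, hj0K, _⟩ := hKi 0
  obtain ⟨j1, hj1K, hj1ne⟩ := hKi j0
  have hex : ∃ i : ZMod m, i ≠ j0 ∧ i ≠ j1 := by
    by_contra h
    push_neg at h
    have hsub : (Finset.univ : Finset (ZMod m)) ⊆ {j0, j1} := by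
      intro x _
      simp only [Finset.mem_insert, Finset.mem_singleton]
      by_cases hx : x = j0
      · exact Or.inl hx
      · exact Or.inr (h x hx)
    have hcard := Finset.card_le_card hsub
    have hcu : (Finset.univ : Finset (ZMod m)).card = m := by
      simp [ZMod.card]
    have h2' : ({j0, j1} : Finset (ZMod m)).card ≤ 2 :=
      Finset.card_insert_le _ _ |>.trans (by simp)
    omega
  obtain ⟨i, hi0, hi1⟩ := hex
  have hjm0 : j0 ∈ decSet m 1 G i := by rw [hdec]; exact ⟨hj0K, fun h => hi0 (by simpa using h.symm)⟩
  have hjm1 : j1 ∈ decSet m 1 G i := by rw [hdec]; exact ⟨hj1K, fun h => hi1 (by simpa using h.symm)⟩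
  exact hj1ne (hS i hjm1 hjm0)
end

section
/- For every integer m ≥ 5 the (m,2) secure decentralized pliable index coding problem with circular side information is not linearly feasible: for every length ℓ and every decentralized linear code G of length ℓ for parameters (m, s = 2), G is not simultaneously correct and secure. -/
open SDPicod

namespace SDAux

variable {m ℓ : ℕ}

/-- basis vector -/
def ee (j : ZMod m) : ZMod m → ZMod 2 := Pi.single j 1

/-- span of rows -/
def VV (G : Fin ℓ → ZMod m → ZMod 2) : Submodule (ZMod 2) (ZMod m → ZMod 2) :=
  Submodule.span (ZMod 2) (Set.range G)

def Mark (G : Fin ℓ → ZMod m → ZMod 2) (a : ZMod m) : Prop := ∃ t, G t = ee a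

def Ed (G : Fin ℓ → ZMod m → ZMod 2) (a : ZMod m) : Prop := ∃ t, G t = ee (a - 1) + ee a

lemma zmod2_cases (c : ZMod 2) : c = 0 ∨ c = 1 := by revert c; decide

lemma addself (x : ZMod m → ZMod 2) : x + x = 0 := by
  funext k
  have : ∀ a : ZMod 2, a + a = 0 := by decide
  simpa using this (x k)

lemma negself (x : ZMod m → ZMod 2) : -x = x := by
  rw [neg_eq_iff_add_eq_zero, addself]

lemma sideInfo_pair (i : ZMod m) : sideInfo m 2 i = {i, i - 1} := by
  ext j
  simp only [sideInfo, Set.mem_setOf_eq, Finset.mem_range, Set.mem_insert_iff,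
    Set.mem_singleton_iff]
  constructor
  · rintro ⟨k, hk, rfl⟩
    interval_cases k <;> simp
  · rintro (rfl | rfl)
    · exact ⟨0, by norm_num⟩
    · exact ⟨1, by norm_num⟩

lemma mem_decSet_iff (G : Fin ℓ → ZMod m → ZMod 2) (i j : ZMod m) :
    j ∈ decSet m 2 G i ↔ j ≠ i ∧ j ≠ i - 1 ∧
      ∃ c d : ZMod 2, ee j + c • ee i + d • ee (i - 1) ∈ VV G := by
  have hb : {v : ZMod m → ZMod 2 | ∃ k ∈ sideInfo m 2 i, v = Pi.single k (1 : ZMod 2)}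
      = {ee i, ee (i - 1)} := by
    rw [sideInfo_pair]
    ext v
    constructor
    · rintro ⟨k, hk, rfl⟩
      rcases hk with rfl | hk
      · left; rfl
      · right; rw [Set.mem_singleton_iff] at hk; rw [hk]; rfl
    · rintro (rfl | hv)
      · exact ⟨i, Or.inl rfl, rfl⟩
      · exact ⟨i - 1, Or.inr rfl, hv⟩
  rw [decSet, Set.mem_setOf_eq, hb, sideInfo_pair, Submodule.span_union]
  constructor
  · rintro ⟨hj, hmem⟩
    simp only [Set.mem_insert_iff, Set.mem_singleton_iff, not_or] at hj
    refine ⟨hj.1, hj.2, ?_⟩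
    rw [Submodule.mem_sup] at hmem
    obtain ⟨y, hy, z, hz, hyz⟩ := hmem
    rw [Submodule.mem_span_pair] at hz
    obtain ⟨c, d, rfl⟩ := hz
    refine ⟨c, d, ?_⟩
    have : ee j + c • ee i + d • ee (i - 1)
        = y + ((c • ee i + d • ee (i-1)) + (c • ee i + d • ee (i-1))) := by
      simp only [ee] at hyz ⊢; rw [← hyz]; ring
    rw [this, addself, add_zero]
    exact hy
  · rintro ⟨h1, h2, c, d, hcd⟩
    refine ⟨?_, ?_⟩
    · simp only [Set.mem_insert_iff, Set.mem_singleton_iff, not_or]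
      exact ⟨h1, h2⟩
    · rw [Submodule.mem_sup]
      refine ⟨ee j + c • ee i + d • ee (i - 1), hcd, c • ee i + d • ee (i-1),
        Submodule.mem_span_pair.mpr ⟨c, d, rfl⟩, ?_⟩
      show _ = ee j
      rw [show ee j + c • ee i + d • ee (i-1) + (c • ee i + d • ee (i-1))
        = ee j + ((c • ee i + d • ee (i-1)) + (c • ee i + d • ee (i-1))) by ring,
        addself, add_zero]


lemma mark_mem {G : Fin ℓ → ZMod m → ZMod 2} {a : ZMod m} (h : Mark G a) :
    ee a ∈ VV G := by
  obtain ⟨t, ht⟩ := h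
  rw [← ht]
  exact Submodule.subset_span ⟨t, rfl⟩

lemma ed_mem {G : Fin ℓ → ZMod m → ZMod 2} {a : ZMod m} (h : Ed G a) :
    ee (a - 1) + ee a ∈ VV G := by
  obtain ⟨t, ht⟩ := h
  rw [← ht]
  exact Submodule.subset_span ⟨t, rfl⟩

lemma Rtrans {G : Fin ℓ → ZMod m → ZMod 2} {x y z : ZMod m → ZMod 2}
    (h1 : x + y ∈ VV G) (h2 : y + z ∈ VV G) : x + z ∈ VV G := by
  have h := Submodule.add_mem _ h1 h2
  rwa [show x + y + (y + z) = x + z + (y + y) by ring, addself, add_zero] at h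

lemma Scancel {G : Fin ℓ → ZMod m → ZMod 2} {x y : ZMod m → ZMod 2}
    (h1 : x + y ∈ VV G) (h2 : y ∈ VV G) : x ∈ VV G := by
  have h := Submodule.add_mem _ h1 h2
  rwa [show x + y + y = x + (y + y) by ring, addself, add_zero] at h

lemma rowcases [Fact (1 < m)] (G : Fin ℓ → ZMod m → ZMod 2)
    (hG : IsDecentralizedCode m 2 G) (t : Fin ℓ) :
    G t = 0 ∨ (∃ a, G t = ee a) ∨ (∃ a, G t = ee (a - 1) + ee a) := by
  obtain ⟨i, hi⟩ := hG t
  rw [sideInfo_pair] at hi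
  have hne : i - 1 ≠ i := fun h => one_ne_zero (sub_eq_self.mp h)
  have hz : ∀ x : ZMod m, x ≠ i → x ≠ i - 1 → G t x = 0 := by
    intro x h1 h2
    by_contra h
    have hx := hi (by simpa [Function.mem_support] using h)
    simp only [Set.mem_insert_iff, Set.mem_singleton_iff] at hx
    tauto
  have key : G t = Pi.single (i - 1) (G t (i - 1)) + Pi.single i (G t i) := by
    funext x
    by_cases h1 : x = i
    · subst h1
      simp [Pi.single_apply, Ne.symm hne]
    · by_cases h2 : x = i - 1
      · subst h2
        simp [Pi.single_apply, hne]
      · simp [Pi.single_apply, h1, h2, hz x h1 h2]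
  rcases zmod2_cases (G t i) with h1 | h1 <;> rcases zmod2_cases (G t (i - 1)) with h2 | h2 <;>
    rw [h1, h2] at key
  · left; simpa using key
  · right; left; exact ⟨i - 1, by simpa [ee] using key⟩
  · right; left; exact ⟨i, by simpa [ee] using key⟩
  · right; right; exact ⟨i, by simpa [ee] using key⟩

lemma proj_zero [Fact (1 < m)] {G : Fin ℓ → ZMod m → ZMod 2}
    (hG : IsDecentralizedCode m 2 G) {k : ZMod m}
    (h1 : ¬ Mark G k) (h2 : ¬ Ed G k) (h3 : ¬ Ed G (k + 1)) :
    ∀ x ∈ VV G, x k = 0 := by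
  have hker : VV G ≤ LinearMap.ker
      (LinearMap.proj (R := ZMod 2) (φ := fun _ : ZMod m => ZMod 2) k) := by
    rw [VV, Submodule.span_le]
    rintro g ⟨t, rfl⟩
    rcases rowcases G hG t with h | ⟨a, ha⟩ | ⟨a, ha⟩
    · simp [SetLike.mem_coe, LinearMap.mem_ker, h]
    · have hak : a ≠ k := fun h' => h1 ⟨t, by rw [ha, h']⟩
      simp [SetLike.mem_coe, LinearMap.mem_ker, ha, ee, Pi.single_apply, Ne.symm hak]
    · have ha1 : a ≠ k := fun h' => h2 ⟨t, by rw [ha, h']⟩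
      have ha2 : a ≠ k + 1 := fun h' => h3 ⟨t, by rw [ha, h']⟩
      have hb : a - 1 ≠ k := fun h' => ha2 (by rw [← h']; ring)
      simp [SetLike.mem_coe, LinearMap.mem_ker, ha, ee, Pi.single_apply,
        Ne.symm ha1, Ne.symm hb]
  intro x hx
  simpa [LinearMap.mem_ker] using hker hx

lemma one_one : (1 : ZMod 2) + 1 = 0 := by decide

lemma sum_ee [NeZero m] (j : ZMod m) : ∑ k, ee (m := m) j k = 1 := by
  simp [ee, Pi.single_apply, Finset.sum_ite_eq']

lemma sum_zero [NeZero m] [Fact (1 < m)] {G : Fin ℓ → ZMod m → ZMod 2}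
    (hG : IsDecentralizedCode m 2 G) (hM : ∀ a, ¬ Mark G a) :
    ∀ x ∈ VV G, ∑ k, x k = 0 := by
  let φ : (ZMod m → ZMod 2) →ₗ[ZMod 2] ZMod 2 :=
    { toFun := fun x => ∑ k, x k
      map_add' := fun x y => by simp [Finset.sum_add_distrib]
      map_smul' := fun c x => by simp [Finset.mul_sum] }
  have hker : VV G ≤ LinearMap.ker φ := by
    rw [VV, Submodule.span_le]
    rintro g ⟨t, rfl⟩
    rcases rowcases G hG t with h | ⟨a, ha⟩ | ⟨a, ha⟩
    · simp [SetLike.mem_coe, LinearMap.mem_ker, h, φ]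
    · exact absurd ⟨t, ha⟩ (hM a)
    · have : φ (G t) = 0 := by
        simp [φ, ha, Finset.sum_add_distrib, sum_ee, one_one]
      simpa [SetLike.mem_coe, LinearMap.mem_ker] using this
  intro x hx
  simpa [LinearMap.mem_ker, φ] using hker hx

lemma avoid (hm : 5 ≤ m) (a b c d : ZMod m) :
    ∃ i : ZMod m, i ≠ a ∧ i ≠ b ∧ i ≠ c ∧ i ≠ d := by
  haveI : NeZero m := ⟨by omega⟩
  have h1 : ({a, b, c, d} : Finset (ZMod m)).card ≤ 4 := by
    have i3 : ({b, c, d} : Finset (ZMod m)).card ≤ 3 := by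
      have i2 : ({c, d} : Finset (ZMod m)).card ≤ 2 := by
        have := Finset.card_insert_le c ({d} : Finset (ZMod m))
        simpa using this
      have := Finset.card_insert_le b ({c, d} : Finset (ZMod m))
      omega
    have := Finset.card_insert_le a ({b, c, d} : Finset (ZMod m))
    omega
  have h4 : (({a, b, c, d} : Finset (ZMod m))ᶜ).Nonempty := by
    rw [← Finset.card_pos, Finset.card_compl, ZMod.card]
    omega
  obtain ⟨i, hi⟩ := h4
  simp only [Finset.mem_compl, Finset.mem_insert, Finset.mem_singleton, not_or] at hi
  exact ⟨i, hi.1, hi.2.1, hi.2.2.1, hi.2.2.2⟩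

lemma S_sub (hm : 5 ≤ m) {G : Fin ℓ → ZMod m → ZMod 2} (hS : Secure m 2 G)
    {j k : ZMod m} (hj : ee j ∈ VV G) (hk : ee k ∈ VV G) : j = k := by
  by_contra hne
  obtain ⟨i, h1, h2, h3, h4⟩ := avoid hm j (j + 1) k (k + 1)
  have hji : j ∈ decSet m 2 G i := by
    rw [mem_decSet_iff]
    exact ⟨Ne.symm h1, fun h => h2 (by rw [h]; ring), 0, 0, by simpa using hj⟩
  have hki : k ∈ decSet m 2 G i := by
    rw [mem_decSet_iff]
    exact ⟨Ne.symm h3, fun h => h4 (by rw [h]; ring), 0, 0, by simpa using hk⟩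
  exact hne (hS i hji hki)

lemma adj [Fact (1 < m)] {G : Fin ℓ → ZMod m → ZMod 2}
    (hG : IsDecentralizedCode m 2 G) {j k : ZMod m}
    (hjk : ee j + ee k ∈ VV G) (hne : j ≠ k) (nmk : ¬ Mark G k) :
    ee (k - 1) + ee k ∈ VV G ∨ ee k + ee (k + 1) ∈ VV G := by
  by_contra hcon
  push_neg at hcon
  have h2 : ¬ Ed G k := fun h => hcon.1 (ed_mem h)
  have h3 : ¬ Ed G (k + 1) := fun h =>
    hcon.2 (by simpa [add_sub_cancel_right] using ed_mem h)
  have hz := proj_zero hG nmk h2 h3 _ hjk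
  rw [Pi.add_apply] at hz
  simp [ee, Pi.single_apply, Ne.symm hne] at hz

end SDAux


open SDAux

theorem infeasible_s_eq_two (m : ℕ) (hm : 5 ≤ m)
    (ℓ : ℕ) (G : Fin ℓ → ZMod m → ZMod 2)
    (hG : IsDecentralizedCode m 2 G) :
    ¬ (Correct m 2 G ∧ Secure m 2 G) := by
  rintro ⟨hC, hS⟩
  haveI : NeZero m := ⟨by omega⟩
  haveI : Fact (1 < m) := ⟨by omega⟩
  have hnz : ∀ d : ℕ, 0 < d → d < m → ((d : ℕ) : ZMod m) ≠ 0 := by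
    intro d hd1 hd2 h
    rw [ZMod.natCast_eq_zero_iff] at h
    exact absurd (Nat.le_of_dvd hd1 h) (by omega)
  have one_ne : (1 : ZMod m) ≠ 0 := by exact_mod_cast hnz 1 (by norm_num) (by omega)
  have two_ne : (2 : ZMod m) ≠ 0 := by exact_mod_cast hnz 2 (by norm_num) (by omega)
  have three_ne : (3 : ZMod m) ≠ 0 := by exact_mod_cast hnz 3 (by norm_num) (by omega)
  have diffne : ∀ (x c : ZMod m), c ≠ 0 → x ≠ x + c := by
    intro x c hc h
    exact hc (left_eq_add.mp h)
  have ne1 : ∀ x : ZMod m, x ≠ x + 1 := fun x => diffne x 1 one_ne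
  have ne2 : ∀ x : ZMod m, x ≠ x + 2 := fun x => diffne x 2 two_ne
  have ne3 : ∀ x : ZMod m, x ≠ x + 3 := fun x => diffne x 3 three_ne
  by_cases hMark : ∃ a, Mark G a
  · -- a marked vertex exists
    obtain ⟨v, hv⟩ := hMark
    have ev : ee v ∈ VV G := mark_mem hv
    obtain ⟨j, hj⟩ := hC (v + 1)
    rw [mem_decSet_iff] at hj
    obtain ⟨hj1, hj2, c, d, hcd⟩ := hj
    rw [show v + 1 - 1 = v by ring] at hj2 hcd
    have hR : ee j + ee (v + 1) ∈ VV G := by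
      rcases zmod2_cases c with rfl | rfl <;> rcases zmod2_cases d with rfl | rfl <;>
        simp only [zero_smul, one_smul, add_zero, zero_add] at hcd
      · exact absurd (S_sub hm hS hcd ev) hj2
      · exact absurd (S_sub hm hS (Scancel hcd ev) ev) hj2
      · exact hcd
      · exact Scancel hcd ev
    have nm1 : ¬ Mark G (v + 1) :=
      fun h => ne1 v (S_sub hm hS (mark_mem h) ev).symm
    rcases adj hG hR hj1 nm1 with h | h
    · rw [show v + 1 - 1 = v by ring] at h
      have h' : ee (v + 1) + ee v ∈ VV G := by rwa [add_comm] at h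
      exact ne1 v (S_sub hm hS (Scancel h' ev) ev).symm
    · rw [show v + 1 + 1 = v + 2 by ring] at h
      have hd1 : v ∈ decSet m 2 G (v + 3) := by
        rw [mem_decSet_iff]
        refine ⟨ne3 v, ?_, 0, 0, by simpa using ev⟩
        rw [show v + 3 - 1 = v + 2 by ring]
        exact ne2 v
      have hd2 : v + 1 ∈ decSet m 2 G (v + 3) := by
        rw [mem_decSet_iff]
        refine ⟨?_, ?_, 0, 1, ?_⟩
        · rw [show v + 3 = v + 1 + 2 by ring]; exact ne2 (v + 1)
        · rw [show v + 3 - 1 = v + 1 + 1 by ring]; exact ne1 (v + 1)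
        · rw [show v + 3 - 1 = v + 2 by ring]; simpa using h
      exact ne1 v (hS (v + 3) hd2 hd1).symm
  · -- no marked vertex
    push_neg at hMark
    have par := sum_zero hG hMark
    have key : ∀ i j : ZMod m, j ∈ decSet m 2 G i →
        (ee j + ee i ∈ VV G ∧ j ≠ i) ∨ (ee j + ee (i - 1) ∈ VV G ∧ j ≠ i - 1) := by
      intro i j hj
      rw [mem_decSet_iff] at hj
      obtain ⟨hj1, hj2, c, d, hcd⟩ := hj
      rcases zmod2_cases c with rfl | rfl <;> rcases zmod2_cases d with rfl | rfl <;>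
        simp only [zero_smul, one_smul, add_zero, zero_add] at hcd
      · have hpar := par _ hcd
        rw [sum_ee] at hpar
        exact absurd hpar one_ne_zero
      · exact Or.inr ⟨hcd, hj2⟩
      · exact Or.inl ⟨hcd, hj1⟩
      · have hpar := par _ hcd
        simp only [Pi.add_apply, Finset.sum_add_distrib, sum_ee] at hpar
        exact absurd hpar (by decide)
    obtain ⟨j0, hj0⟩ := hC 0
    obtain ⟨k, hjk, hRk⟩ : ∃ k : ZMod m, j0 ≠ k ∧ ee j0 + ee k ∈ VV G := by
      rcases key 0 j0 hj0 with ⟨h, hne⟩ | ⟨h, hne⟩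
      · exact ⟨0, hne, h⟩
      · exact ⟨0 - 1, hne, h⟩
    obtain ⟨a, ha⟩ : ∃ a : ZMod m, ee a + ee (a + 1) ∈ VV G := by
      rcases adj hG hRk hjk (hMark k) with h | h
      · exact ⟨k - 1, by rw [show k - 1 + 1 = k by ring]; exact h⟩
      · exact ⟨k, h⟩
    obtain ⟨j, hj⟩ := hC (a + 1)
    have hj' := hj
    rw [mem_decSet_iff] at hj'
    obtain ⟨hja1, hja, -⟩ := hj'
    rw [show a + 1 - 1 = a by ring] at hja
    have hRj : ee j + ee (a + 1) ∈ VV G := by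
      rcases key (a + 1) j hj with ⟨h, -⟩ | ⟨h, -⟩
      · exact h
      · rw [show a + 1 - 1 = a by ring] at h
        exact Rtrans h ha
    have hb : ee (a + 1) + ee (a + 2) ∈ VV G := by
      by_cases hj2 : j = a + 2
      · rw [hj2] at hRj
        rwa [add_comm] at hRj
      · exfalso
        have hd1 : a ∈ decSet m 2 G (a + 2) := by
          rw [mem_decSet_iff]
          refine ⟨ne2 a, ?_, 0, 1, ?_⟩
          · rw [show a + 2 - 1 = a + 1 by ring]; exact ne1 a
          · rw [show a + 2 - 1 = a + 1 by ring]; simpa using ha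
        have hd2 : j ∈ decSet m 2 G (a + 2) := by
          rw [mem_decSet_iff]
          refine ⟨hj2, ?_, 0, 1, ?_⟩
          · rw [show a + 2 - 1 = a + 1 by ring]; exact hja1
          · rw [show a + 2 - 1 = a + 1 by ring]; simpa using hRj
        exact hja (hS (a + 2) hd1 hd2).symm
    have hac : ee a + ee (a + 2) ∈ VV G := Rtrans ha hb
    have hd1 : a ∈ decSet m 2 G (a + 3) := by
      rw [mem_decSet_iff]
      refine ⟨ne3 a, ?_, 0, 1, ?_⟩
      · rw [show a + 3 - 1 = a + 2 by ring]; exact ne2 a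
      · rw [show a + 3 - 1 = a + 2 by ring]; simpa using hac
    have hd2 : a + 1 ∈ decSet m 2 G (a + 3) := by
      rw [mem_decSet_iff]
      refine ⟨?_, ?_, 0, 1, ?_⟩
      · rw [show a + 3 = a + 1 + 2 by ring]; exact ne2 (a + 1)
      · rw [show a + 3 - 1 = a + 1 + 1 by ring]; exact ne1 (a + 1)
      · rw [show a + 3 - 1 = a + 2 by ring]; simpa using hb
    exact ne1 a (hS (a + 3) hd2 hd1).symm
end

section
/- For every odd integer m ≥ 7 the (m,3) secure decentralized pliable index coding problem with circular side information is not linearly feasible: for every length ℓ and every decentralized linear code G of length ℓ for parameters (m, s = 3), G is not simultaneously correct and secure. -/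
open SDPicod

namespace SDPicodAux


open SDPicod

variable {m : ℕ}

lemma castk_ne [NeZero m] (hm : 7 ≤ m) {k : ℕ} (h0 : 0 < k) (h7 : k < 7) :
    (k : ZMod m) ≠ 0 := by
  rw [Ne, ZMod.natCast_eq_zero_iff]
  intro hdvd
  have := Nat.le_of_dvd h0 hdvd
  omega

lemma ne_shift [NeZero m] (hm : 7 ≤ m) (k : ℕ) (h0 : 0 < k) (h7 : k < 7)
    (x y : ZMod m) (hk : x + (k : ℕ) = y) : x ≠ y ∧ y ≠ x := by
  have h : x ≠ y := by
    intro h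
    exact castk_ne hm h0 h7 (by linear_combination hk - h)
  exact ⟨h, h.symm⟩

lemma mem_side_iff (i j : ZMod m) :
    j ∈ sideInfo m 3 i ↔ j = i ∨ j = i - 1 ∨ j = i - 2 := by
  constructor
  · rintro ⟨k, hk, rfl⟩
    simp only [Finset.mem_range] at hk
    interval_cases k
    · left; push_cast; ring
    · right; left; push_cast; ring
    · right; right; push_cast; ring
  · rintro (rfl | rfl | rfl)
    · exact ⟨0, by simp, by push_cast; ring⟩
    · exact ⟨1, by simp, by push_cast; ring⟩
    · exact ⟨2, by simp, by push_cast; ring⟩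

def pvec (a : ZMod m) : ZMod m → ZMod 2 := Pi.single a 1 + Pi.single (a + 1) 1

def tvec (c : ZMod m) : ZMod m → ZMod 2 :=
  Pi.single c 1 + Pi.single (c + 1) 1 + Pi.single (c + 2) 1

lemma pvec_supp {a x : ZMod m} (h : pvec a x ≠ 0) : x = a ∨ x = a + 1 := by
  by_contra hc
  push_neg at hc
  simp [pvec, Pi.single_apply, hc.1, hc.2] at h

lemma tvec_supp {c x : ZMod m} (h : tvec c x ≠ 0) : x = c ∨ x = c + 1 ∨ x = c + 2 := by
  by_contra hc
  push_neg at hc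
  simp [tvec, Pi.single_apply, hc.1, hc.2.1, hc.2.2] at h

lemma pvec_apply_self [NeZero m] (hm : 7 ≤ m) (a : ZMod m) : pvec a a = 1 := by
  have h := (ne_shift hm 1 (by norm_num) (by norm_num) a (a + 1) (by push_cast; ring)).1
  simp [pvec, Pi.single_apply, h]

lemma pvec_apply_one [NeZero m] (hm : 7 ≤ m) (a : ZMod m) : pvec a (a + 1) = 1 := by
  have h := (ne_shift hm 1 (by norm_num) (by norm_num) a (a + 1) (by push_cast; ring)).2
  simp [pvec, Pi.single_apply, h]

lemma tvec_apply_0 [NeZero m] (hm : 7 ≤ m) (c : ZMod m) : tvec c c = 1 := by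
  have h1 := (ne_shift hm 1 (by norm_num) (by norm_num) c (c + 1) (by push_cast; ring)).1
  have h2 := (ne_shift hm 2 (by norm_num) (by norm_num) c (c + 2) (by push_cast; ring)).1
  simp [tvec, Pi.single_apply, h1, h2]

lemma tvec_apply_1 [NeZero m] (hm : 7 ≤ m) (c : ZMod m) : tvec c (c + 1) = 1 := by
  have h1 := (ne_shift hm 1 (by norm_num) (by norm_num) c (c + 1) (by push_cast; ring)).2
  have h2 := (ne_shift hm 1 (by norm_num) (by norm_num) (c + 1) (c + 2) (by push_cast; ring)).1
  simp [tvec, Pi.single_apply, h1, h2]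

lemma tvec_apply_2 [NeZero m] (hm : 7 ≤ m) (c : ZMod m) : tvec c (c + 2) = 1 := by
  have h1 := (ne_shift hm 2 (by norm_num) (by norm_num) c (c + 2) (by push_cast; ring)).2
  have h2 := (ne_shift hm 1 (by norm_num) (by norm_num) (c + 1) (c + 2) (by push_cast; ring)).2
  simp [tvec, Pi.single_apply, h1, h2]

lemma pvec_apply_ne {a x : ZMod m} (h1 : x ≠ a) (h2 : x ≠ a + 1) : pvec a x = 0 := by
  simp [pvec, Pi.single_apply, h1, h2]

lemma tvec_apply_ne {c x : ZMod m} (h1 : x ≠ c) (h2 : x ≠ c + 1) (h3 : x ≠ c + 2) :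
    tvec c x = 0 := by
  simp [tvec, Pi.single_apply, h1, h2, h3]



open SDPicod

variable {m : ℕ}

lemma vanish_span {S : Set (ZMod m)} {u : ZMod m → ZMod 2}
    (hu : u ∈ Submodule.span (ZMod 2) {v | ∃ k ∈ S, v = Pi.single k (1 : ZMod 2)}) :
    ∀ x ∉ S, u x = 0 := by
  let W : Submodule (ZMod 2) (ZMod m → ZMod 2) :=
    { carrier := {w | ∀ x ∉ S, w x = 0}
      add_mem' := by
        intro a b ha hb x hx
        simp only [Pi.add_apply, ha x hx, hb x hx, add_zero]
      zero_mem' := by intro x _; rfl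
      smul_mem' := by
        intro r w hw x hx
        simp only [Pi.smul_apply, hw x hx, smul_zero] }
  have hle : Submodule.span (ZMod 2) {v | ∃ k ∈ S, v = Pi.single k (1 : ZMod 2)} ≤ W := by
    rw [Submodule.span_le]
    rintro v ⟨k, hk, rfl⟩ x hx
    exact Pi.single_eq_of_ne (fun h : x = k => hx (h ▸ hk)) 1
  exact hle hu

lemma mem_decSet_of_vec [NeZero m] {s ℓ : ℕ} (G : Fin ℓ → ZMod m → ZMod 2) (i j : ZMod m)
    (v : ZMod m → ZMod 2) (hv : v ∈ Submodule.span (ZMod 2) (Set.range G))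
    (hj : j ∉ sideInfo m s i) (hvj : v j ≠ 0)
    (hsupp : ∀ x, v x ≠ 0 → x ∈ sideInfo m s i ∨ x = j) :
    j ∈ decSet m s G i := by
  refine ⟨hj, ?_⟩
  set u : ZMod m → ZMod 2 := v + Pi.single j 1 with hu
  have huS : ∀ x, x ∉ sideInfo m s i → u x = 0 := by
    intro x hx
    by_cases hxj : x = j
    · subst hxj
      have h1 : v x = 1 := by
        revert hvj; generalize v x = z; revert z; decide
      simp only [hu, Pi.add_apply, h1, Pi.single_eq_same]
      decide
    · have hvx : v x = 0 := by
        by_contra h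
        rcases hsupp x h with h' | h'
        · exact hx h'
        · exact hxj h'
      simp [hu, Pi.add_apply, hvx, Pi.single_eq_of_ne hxj]
  have huspan : u ∈ Submodule.span (ZMod 2)
      {w | ∃ k ∈ sideInfo m s i, w = Pi.single k (1 : ZMod 2)} := by
    have hrep : u = ∑ x : ZMod m, Pi.single x (u x) := (Finset.univ_sum_single u).symm
    rw [hrep]
    refine Submodule.sum_mem _ (fun x _ => ?_)
    by_cases hx : x ∈ sideInfo m s i
    · have hsm : Pi.single x (u x) = (u x) • (Pi.single x (1 : ZMod 2) : ZMod m → ZMod 2) := by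
        funext y
        by_cases hyx : y = x
        · subst hyx
          simp only [Pi.single_eq_same, Pi.smul_apply, smul_eq_mul, mul_one]
        · simp only [Pi.single_eq_of_ne hyx, Pi.smul_apply, smul_eq_mul, mul_zero]
      rw [hsm]
      exact Submodule.smul_mem _ _ (Submodule.subset_span ⟨x, hx, rfl⟩)
    · rw [huS x hx, Pi.single_zero]
      exact Submodule.zero_mem _
  have hkey : (Pi.single j (1 : ZMod 2) : ZMod m → ZMod 2) = v + u := by
    funext x
    rw [hu]
    simp only [Pi.add_apply]
    generalize (Pi.single j (1 : ZMod 2) : ZMod m → ZMod 2) x = sx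
    generalize v x = z
    revert z sx
    decide
  rw [Submodule.span_union, hkey]
  exact Submodule.add_mem _ (Submodule.mem_sup_left hv) (Submodule.mem_sup_right huspan)

lemma exists_vec_of_mem_decSet {s ℓ : ℕ} {G : Fin ℓ → ZMod m → ZMod 2} {i j : ZMod m}
    (hj : j ∈ decSet m s G i) :
    ∃ v ∈ Submodule.span (ZMod 2) (Set.range G),
      v j ≠ 0 ∧ ∀ x, v x ≠ 0 → x ∈ sideInfo m s i ∨ x = j := by
  obtain ⟨hjA, hmem⟩ := hj
  rw [Submodule.span_union] at hmem
  obtain ⟨v, hv, w, hw, hvw⟩ := Submodule.mem_sup.mp hmem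
  have hwS := vanish_span hw
  refine ⟨v, hv, ?_, ?_⟩
  · have h1 : v j + w j = 1 := by
      have := congrFun hvw j
      simpa [Pi.single_eq_same] using this
    rw [hwS j hjA, add_zero] at h1
    rw [h1]
    decide
  · intro x hx
    by_cases hxS : x ∈ sideInfo m s i
    · exact Or.inl hxS
    right
    by_contra hxj
    have h2 := congrFun hvw x
    rw [Pi.add_apply, hwS x hxS, add_zero, Pi.single_eq_of_ne hxj] at h2
    exact hx h2


end SDPicodAux

open SDPicodAux

set_option maxHeartbeats 1000000

theorem infeasible_s_eq_three_odd (m : ℕ) (hm : 7 ≤ m) (hodd : Odd m)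
    (ℓ : ℕ) (G : Fin ℓ → ZMod m → ZMod 2)
    (hG : IsDecentralizedCode m 3 G) :
    ¬ (Correct m 3 G ∧ Secure m 3 G) := by
  rintro ⟨hCor, hSec⟩
  haveI : NeZero m := ⟨by omega⟩
  classical
  set V := Submodule.span (ZMod 2) (Set.range G) with hV
  have D1 := ne_shift (m := m) hm 1 (by norm_num) (by norm_num)
  have D2 := ne_shift (m := m) hm 2 (by norm_num) (by norm_num)
  have D3 := ne_shift (m := m) hm 3 (by norm_num) (by norm_num)
  have D4 := ne_shift (m := m) hm 4 (by norm_num) (by norm_num)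
  have D5 := ne_shift (m := m) hm 5 (by norm_num) (by norm_num)
  have D6 := ne_shift (m := m) hm 6 (by norm_num) (by norm_num)
  have notin : ∀ i j : ZMod m, j ≠ i → j ≠ i - 1 → j ≠ i - 2 → j ∉ sideInfo m 3 i := by
    intro i j h1 h2 h3 hmem
    rcases (mem_side_iff i j).1 hmem with h | h | h
    · exact h1 h
    · exact h2 h
    · exact h3 h
  -- pin a singleton
  have pin1 : ∀ b i : ZMod m, (Pi.single b (1 : ZMod 2) : ZMod m → ZMod 2) ∈ V →
      b ∉ sideInfo m 3 i → b ∈ decSet m 3 G i := by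
    intro b i hb hbi
    refine mem_decSet_of_vec G i b _ (hV ▸ hb) hbi ?_ ?_
    · rw [Pi.single_eq_same]; decide
    · intro x hx
      right
      by_contra hxb
      rw [Pi.single_eq_of_ne hxb] at hx
      exact hx rfl
  -- L1 : no singleton in V
  have hL1 : ∀ b : ZMod m, (Pi.single b (1 : ZMod 2) : ZMod m → ZMod 2) ∉ V := by
    intro b hu
    obtain ⟨j, hjd⟩ := hCor b
    have hjA : j ∉ sideInfo m 3 b := hjd.1
    obtain ⟨v, hv, hvj, hvsupp⟩ := exists_vec_of_mem_decSet hjd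
    have hjb : j ≠ b := fun h => hjA ((mem_side_iff b j).2 (Or.inl h))
    have hjb1 : j ≠ b - 1 := fun h => hjA ((mem_side_iff b j).2 (Or.inr (Or.inl h)))
    have hjb2 : j ≠ b - 2 := fun h => hjA ((mem_side_iff b j).2 (Or.inr (Or.inr h)))
    set w : ZMod m → ZMod 2 := v + (v b) • (Pi.single b (1 : ZMod 2) : ZMod m → ZMod 2) with hw
    have hwV : w ∈ V := Submodule.add_mem _ (hV ▸ hv) (Submodule.smul_mem _ _ hu)
    have hwb : w b = 0 := by
      rw [hw]
      simp only [Pi.add_apply, Pi.smul_apply, Pi.single_eq_same, smul_eq_mul, mul_one]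
      generalize v b = z; revert z; decide
    have hwother : ∀ x, x ≠ b → w x = v x := by
      intro x hx
      rw [hw]
      simp [Pi.single_eq_of_ne hx]
    have hwj : w j ≠ 0 := by rw [hwother j hjb]; exact hvj
    have hwsupp : ∀ x, w x ≠ 0 → x = b - 1 ∨ x = b - 2 ∨ x = j := by
      intro x hx
      have hxb : x ≠ b := fun e => hx (by rw [e]; exact hwb)
      have hvx : v x ≠ 0 := by rw [← hwother x hxb]; exact hx
      rcases hvsupp x hvx with hs | hs
      · rcases (mem_side_iff b x).1 hs with h | h | h
        · exact absurd h hxb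
        · exact Or.inl h
        · exact Or.inr (Or.inl h)
      · exact Or.inr (Or.inr hs)
    by_cases hj3 : j = b - 3
    · subst hj3
      by_cases h1 : w (b - 1) = 0
      · by_cases h2 : w (b - 2) = 0
        · -- two singleton pins at user b+3
          have p1 : b ∈ decSet m 3 G (b + 3) :=
            pin1 b (b + 3) hu (notin _ _ (D3 b (b + 3) (by push_cast; ring)).1
              (fun h => (D2 b (b + 3 - 1) (by push_cast; ring)).1 h)
              (fun h => (D1 b (b + 3 - 2) (by push_cast; ring)).1 h))
          have p2 : b - 3 ∈ decSet m 3 G (b + 3) := by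
            refine mem_decSet_of_vec G (b + 3) (b - 3) w (hV ▸ hwV) ?_ hwj ?_
            · exact notin _ _ (fun h => (D6 (b - 3) (b + 3) (by push_cast; ring)).1 h)
                (fun h => (D5 (b - 3) (b + 3 - 1) (by push_cast; ring)).1 h)
                (fun h => (D4 (b - 3) (b + 3 - 2) (by push_cast; ring)).1 h)
            · intro x hx
              rcases hwsupp x hx with h | h | h
              · rw [h] at hx; exact absurd h1 hx
              · rw [h] at hx; exact absurd h2 hx
              · exact Or.inr h
          have hcon := hSec (b + 3) p2 p1
          exact (D3 (b - 3) b (by push_cast; ring)).1 hcon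
        · -- w (b-2) ≠ 0, w (b-1) = 0 : pin w at user b-3 with target b-2
          have p1 : b ∈ decSet m 3 G (b - 3) :=
            pin1 b (b - 3) hu (notin _ _ (fun h => (D3 (b - 3) b (by push_cast; ring)).2 h)
              (fun h => (D4 (b - 3 - 1) b (by push_cast; ring)).2 h)
              (fun h => (D5 (b - 3 - 2) b (by push_cast; ring)).2 h))
          have p2 : b - 2 ∈ decSet m 3 G (b - 3) := by
            refine mem_decSet_of_vec G (b - 3) (b - 2) w (hV ▸ hwV) ?_ h2 ?_
            · exact notin _ _ (fun h => (D1 (b - 3) (b - 2) (by push_cast; ring)).2 h)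
                (fun h => (D2 (b - 3 - 1) (b - 2) (by push_cast; ring)).2 h)
                (fun h => (D3 (b - 3 - 2) (b - 2) (by push_cast; ring)).2 h)
            · intro x hx
              rcases hwsupp x hx with h | h | h
              · rw [h] at hx; exact absurd h1 hx
              · exact Or.inr h
              · left
                exact (mem_side_iff _ _).2 (Or.inl h)
          have hcon := hSec (b - 3) p2 p1
          exact (D2 (b - 2) b (by push_cast; ring)).1 hcon
      · -- w (b-1) ≠ 0 : pin w at user b-2 with target b-1
        have p1 : b ∈ decSet m 3 G (b - 2) :=
          pin1 b (b - 2) hu (notin _ _ (fun h => (D2 (b - 2) b (by push_cast; ring)).2 h)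
            (fun h => (D3 (b - 2 - 1) b (by push_cast; ring)).2 h)
            (fun h => (D4 (b - 2 - 2) b (by push_cast; ring)).2 h))
        have p2 : b - 1 ∈ decSet m 3 G (b - 2) := by
          refine mem_decSet_of_vec G (b - 2) (b - 1) w (hV ▸ hwV) ?_ h1 ?_
          · exact notin _ _ (fun h => (D1 (b - 2) (b - 1) (by push_cast; ring)).2 h)
              (fun h => (D2 (b - 2 - 1) (b - 1) (by push_cast; ring)).2 h)
              (fun h => (D3 (b - 2 - 2) (b - 1) (by push_cast; ring)).2 h)
          · intro x hx
            rcases hwsupp x hx with h | h | h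
            · exact Or.inr h
            · left; exact (mem_side_iff _ _).2 (Or.inl h)
            · left; exact (mem_side_iff _ _).2 (Or.inr (Or.inl (by rw [h]; ring)))
        have hcon := hSec (b - 2) p2 p1
        exact (D1 (b - 1) b (by push_cast; ring)).1 hcon
    · -- j ≠ b - 3 : pin w at user b-1 with target j
      have p1 : b ∈ decSet m 3 G (b - 1) :=
        pin1 b (b - 1) hu (notin _ _ (fun h => (D1 (b - 1) b (by push_cast; ring)).2 h)
          (fun h => (D2 (b - 1 - 1) b (by push_cast; ring)).2 h)
          (fun h => (D3 (b - 1 - 2) b (by push_cast; ring)).2 h))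
      have p2 : j ∈ decSet m 3 G (b - 1) := by
        refine mem_decSet_of_vec G (b - 1) j w (hV ▸ hwV) ?_ hwj ?_
        · exact notin _ _ hjb1 (fun h => hjb2 (by rw [h]; ring))
            (fun h => hj3 (by rw [h]; ring))
        · intro x hx
          rcases hwsupp x hx with h | h | h
          · left; exact (mem_side_iff _ _).2 (Or.inl h)
          · left; exact (mem_side_iff _ _).2 (Or.inr (Or.inl (by rw [h]; ring)))
          · exact Or.inr h
      exact hjb (hSec (b - 1) p2 p1)
  -- L2 : no gap pair in V
  have hL2 : ∀ b : ZMod m,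
      ((Pi.single b (1 : ZMod 2) : ZMod m → ZMod 2) + Pi.single (b + 2) 1) ∉ V := by
    intro b hu
    set u : ZMod m → ZMod 2 := Pi.single b 1 + Pi.single (b + 2) 1 with hudef
    have hub : u b = 1 := by
      rw [hudef]
      simp [Pi.single_apply, (D2 b (b + 2) (by push_cast; ring)).1]
    have hub2 : u (b + 2) = 1 := by
      rw [hudef]
      simp [Pi.single_apply, (D2 b (b + 2) (by push_cast; ring)).2]
    have huother : ∀ x, x ≠ b → x ≠ b + 2 → u x = 0 := by
      intro x hx1 hx2
      rw [hudef]
      simp [Pi.single_apply, hx1, hx2]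
    have husupp : ∀ x, u x ≠ 0 → x = b ∨ x = b + 2 := by
      intro x hx
      by_contra hc
      push_neg at hc
      exact hx (huother x hc.1 hc.2)
    -- pins from u
    have pU1 : b + 2 ∈ decSet m 3 G b := by
      refine mem_decSet_of_vec G b (b + 2) u (hV ▸ hu) ?_ (by rw [hub2]; decide) ?_
      · exact notin _ _ (D2 b (b + 2) (by push_cast; ring)).2
          (fun h => (D3 (b - 1) (b + 2) (by push_cast; ring)).2 h)
          (fun h => (D4 (b - 2) (b + 2) (by push_cast; ring)).2 h)
      · intro x hx
        rcases husupp x hx with h | h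
        · left; exact (mem_side_iff _ _).2 (Or.inl h)
        · exact Or.inr h
    have pU3 : b ∈ decSet m 3 G (b + 3) := by
      refine mem_decSet_of_vec G (b + 3) b u (hV ▸ hu) ?_ (by rw [hub]; decide) ?_
      · exact notin _ _ (D3 b (b + 3) (by push_cast; ring)).1
          (fun h => (D2 b (b + 3 - 1) (by push_cast; ring)).1 h)
          (fun h => (D1 b (b + 3 - 2) (by push_cast; ring)).1 h)
      · intro x hx
        rcases husupp x hx with h | h
        · exact Or.inr h
        · left; exact (mem_side_iff _ _).2 (Or.inr (Or.inl (by rw [h]; ring)))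
    have pU4 : b ∈ decSet m 3 G (b + 4) := by
      refine mem_decSet_of_vec G (b + 4) b u (hV ▸ hu) ?_ (by rw [hub]; decide) ?_
      · exact notin _ _ (D4 b (b + 4) (by push_cast; ring)).1
          (fun h => (D3 b (b + 4 - 1) (by push_cast; ring)).1 h)
          (fun h => (D2 b (b + 4 - 2) (by push_cast; ring)).1 h)
      · intro x hx
        rcases husupp x hx with h | h
        · exact Or.inr h
        · left; exact (mem_side_iff _ _).2 (Or.inr (Or.inr (by rw [h]; ring)))
    -- correctness at user b+2
    obtain ⟨j, hjd⟩ := hCor (b + 2)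
    have hjA : j ∉ sideInfo m 3 (b + 2) := hjd.1
    obtain ⟨v, hv, hvj, hvsupp⟩ := exists_vec_of_mem_decSet hjd
    have hjb2 : j ≠ b + 2 := fun h => hjA ((mem_side_iff _ _).2 (Or.inl h))
    have hjb1 : j ≠ b + 1 := fun h => hjA ((mem_side_iff _ _).2 (Or.inr (Or.inl (by rw [h]; ring))))
    have hjb : j ≠ b := fun h => hjA ((mem_side_iff _ _).2 (Or.inr (Or.inr (by rw [h]; ring))))
    set w : ZMod m → ZMod 2 := v + (v b) • u with hw
    have hwV : w ∈ V := Submodule.add_mem _ (hV ▸ hv) (Submodule.smul_mem _ _ hu)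
    have hwb : w b = 0 := by
      rw [hw]
      simp only [Pi.add_apply, Pi.smul_apply, hub, smul_eq_mul, mul_one]
      generalize v b = z; revert z; decide
    have hwother : ∀ x, x ≠ b → x ≠ b + 2 → w x = v x := by
      intro x hx1 hx2
      rw [hw]
      simp [huother x hx1 hx2]
    have hwj : w j ≠ 0 := by rw [hwother j hjb hjb2]; exact hvj
    have hwsupp : ∀ x, w x ≠ 0 → x = b + 1 ∨ x = b + 2 ∨ x = j := by
      intro x hx
      have hxb : x ≠ b := fun e => hx (by rw [e]; exact hwb)
      by_cases hxb2 : x = b + 2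
      · exact Or.inr (Or.inl hxb2)
      have hvx : v x ≠ 0 := by rw [← hwother x hxb hxb2]; exact hx
      rcases hvsupp x hvx with hs | hs
      · rcases (mem_side_iff _ x).1 hs with h | h | h
        · exact absurd h hxb2
        · left; rw [h]; ring
        · exact absurd (by rw [h]; ring) hxb
      · exact Or.inr (Or.inr hs)
    by_cases hj3 : j = b + 3
    · subst hj3
      by_cases h1 : w (b + 1) = 0
      · by_cases h2 : w (b + 2) = 0
        · -- w = single (b+3) 1
          have hweq : (Pi.single (b + 3) (1 : ZMod 2) : ZMod m → ZMod 2) = w := by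
            funext x
            by_cases hx3 : x = b + 3
            · subst hx3
              rw [Pi.single_eq_same]
              revert hwj; generalize w (b + 3) = z; revert z; decide
            · rw [Pi.single_eq_of_ne hx3]
              by_contra hne
              have hx := hwsupp x (fun h => hne h.symm)
              rcases hx with h | h | h
              · rw [h] at hne; exact hne h1.symm
              · rw [h] at hne; exact hne h2.symm
              · exact hx3 h
          exact hL1 (b + 3) (hweq ▸ hwV)
        · -- w (b+2) ≠ 0 : consider w + u, support {b, b+3}
          set h2v : ZMod m → ZMod 2 := w + u with hh2
          have hh2V : h2v ∈ V := Submodule.add_mem _ hwV hu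
          have hh2b : h2v b = 1 := by
            rw [hh2]; simp only [Pi.add_apply, hwb, hub, zero_add]
          have hh2b3 : h2v (b + 3) ≠ 0 := by
            rw [hh2]
            simp only [Pi.add_apply]
            rw [huother (b + 3) (D3 b (b + 3) (by push_cast; ring)).2
              (fun h => (D1 (b + 2) (b + 3) (by push_cast; ring)).2 h), add_zero]
            exact hwj
          have hh2b2 : h2v (b + 2) = 0 := by
            rw [hh2]
            simp only [Pi.add_apply, hub2]
            have : w (b + 2) = 1 := by revert h2; generalize w (b + 2) = z; revert z; decide
            rw [this]; decide
          have hh2b1 : h2v (b + 1) = 0 := by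
            rw [hh2]
            simp only [Pi.add_apply, h1]
            rw [huother (b + 1) (D1 b (b + 1) (by push_cast; ring)).2
              (fun h => (D1 (b + 1) (b + 2) (by push_cast; ring)).1 h), add_zero]
          have hsupp2 : ∀ x, h2v x ≠ 0 → x = b ∨ x = b + 3 := by
            intro x hx
            have hx1 : x ≠ b + 1 := fun e => hx (by rw [e]; exact hh2b1)
            have hx2 : x ≠ b + 2 := fun e => hx (by rw [e]; exact hh2b2)
            by_cases hxb : x = b
            · exact Or.inl hxb
            by_cases hxb3 : x = b + 3
            · exact Or.inr hxb3
            exfalso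
            apply hx
            rw [hh2]
            simp only [Pi.add_apply]
            rw [huother x hxb hx2, add_zero]
            by_contra hne
            rcases hwsupp x hne with h | h | h
            · exact hx1 h
            · exact hx2 h
            · exact hxb3 h
          have p2 : b + 3 ∈ decSet m 3 G b := by
            refine mem_decSet_of_vec G b (b + 3) h2v (hV ▸ hh2V) ?_ hh2b3 ?_
            · exact notin _ _ (D3 b (b + 3) (by push_cast; ring)).2
                (fun h => (D4 (b - 1) (b + 3) (by push_cast; ring)).2 h)
                (fun h => (D5 (b - 2) (b + 3) (by push_cast; ring)).2 h)
            · intro x hx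
              rcases hsupp2 x hx with h | h
              · left; exact (mem_side_iff _ _).2 (Or.inl h)
              · exact Or.inr h
          have hcon := hSec b p2 pU1
          exact (D1 (b + 2) (b + 3) (by push_cast; ring)).2 hcon
      · -- w (b+1) ≠ 0 : pin w at user b+4 with target b+1
        have p2 : b + 1 ∈ decSet m 3 G (b + 4) := by
          refine mem_decSet_of_vec G (b + 4) (b + 1) w (hV ▸ hwV) ?_ h1 ?_
          · exact notin _ _ (fun h => (D3 (b + 1) (b + 4) (by push_cast; ring)).1 h)
              (fun h => (D2 (b + 1) (b + 4 - 1) (by push_cast; ring)).1 h)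
              (fun h => (D1 (b + 1) (b + 4 - 2) (by push_cast; ring)).1 h)
          · intro x hx
            rcases hwsupp x hx with h | h | h
            · exact Or.inr h
            · left; exact (mem_side_iff _ _).2 (Or.inr (Or.inr (by rw [h]; ring)))
            · left; exact (mem_side_iff _ _).2 (Or.inr (Or.inl (by rw [h]; ring)))
        have hcon := hSec (b + 4) p2 pU4
        exact (D1 b (b + 1) (by push_cast; ring)).2 hcon
    · -- j ≠ b+3 : pin w at user b+3 with target j
      have p2 : j ∈ decSet m 3 G (b + 3) := by
        refine mem_decSet_of_vec G (b + 3) j w (hV ▸ hwV) ?_ hwj ?_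
        · exact notin _ _ hj3 (fun h => hjb2 (by rw [h]; ring))
            (fun h => hjb1 (by rw [h]; ring))
        · intro x hx
          rcases hwsupp x hx with h | h | h
          · left; exact (mem_side_iff _ _).2 (Or.inr (Or.inr (by rw [h]; ring)))
          · left; exact (mem_side_iff _ _).2 (Or.inr (Or.inl (by rw [h]; ring)))
          · exact Or.inr h
      exact hjb (hSec (b + 3) p2 pU3)
  -- row classification
  have rowclass : ∀ w : ZMod m → ZMod 2, w ∈ V → ∀ i₀ : ZMod m,
      (∀ x, w x ≠ 0 → x ∈ sideInfo m 3 i₀) →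
      w = 0 ∨ (∃ a, w = pvec a) ∨ (∃ c, w = tvec c) := by
    intro w hwV i₀ hsupp
    set a : ZMod m := i₀ - 2 with ha
    have hmem : ∀ x, w x ≠ 0 → x = a ∨ x = a + 1 ∨ x = a + 2 := by
      intro x hx
      rcases (mem_side_iff i₀ x).1 (hsupp x hx) with h | h | h
      · right; right; rw [h, ha]; ring
      · right; left; rw [h, ha]; ring
      · left; rw [h, ha]
    have e01 := D1 a (a + 1) (by push_cast; ring)
    have e02 := D2 a (a + 2) (by push_cast; ring)
    have e12 := D1 (a + 1) (a + 2) (by push_cast; ring)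
    have hrep : w = Pi.single a (w a) + Pi.single (a + 1) (w (a + 1))
        + Pi.single (a + 2) (w (a + 2)) := by
      funext x
      by_cases h0 : x = a
      · subst h0
        simp [Pi.single_apply, e01.1, e02.1]
      by_cases h1 : x = a + 1
      · subst h1
        simp [Pi.single_apply, e01.2, e12.1]
      by_cases h2 : x = a + 2
      · subst h2
        simp [Pi.single_apply, e02.2, e12.2]
      have hx0 : w x = 0 := by
        by_contra hne
        rcases hmem x hne with h | h | h
        · exact h0 h
        · exact h1 h
        · exact h2 h
      simp [Pi.single_apply, h0, h1, h2, hx0]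
    have z8 : ∀ z : ZMod 2, z = 0 ∨ z = 1 := by decide
    rcases z8 (w a) with ea | ea <;> rcases z8 (w (a + 1)) with eb | eb <;>
      rcases z8 (w (a + 2)) with ec | ec <;> rw [ea, eb, ec] at hrep
    · left; rw [hrep]; simp
    · exact absurd (hV ▸ hwV) (by rw [show w = (Pi.single (a+2) (1:ZMod 2) : ZMod m → ZMod 2) from by rw [hrep]; simp]; exact hV ▸ hL1 (a+2))
    · exact absurd hwV (by rw [show w = (Pi.single (a+1) (1:ZMod 2) : ZMod m → ZMod 2) from by rw [hrep]; simp]; exact hL1 (a+1))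
    · right; left
      refine ⟨a + 1, ?_⟩
      rw [hrep, pvec]
      rw [show a + 1 + 1 = a + 2 from by ring]
      simp
    · exact absurd hwV (by rw [show w = (Pi.single a (1:ZMod 2) : ZMod m → ZMod 2) from by rw [hrep]; simp]; exact hL1 a)
    · exact absurd hwV (by rw [show w = (Pi.single a (1:ZMod 2) : ZMod m → ZMod 2) + Pi.single (a+2) 1 from by rw [hrep]; simp]; exact hL2 a)
    · right; left
      refine ⟨a, ?_⟩
      rw [hrep, pvec]
      simp
    · right; right
      refine ⟨a, ?_⟩
      rw [hrep, tvec]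
  -- gadget pins
  have one_ne : (1 : ZMod 2) ≠ 0 := by decide
  have htwo : (1 : ZMod 2) + 1 = 0 := by decide
  have hzadd : (0 : ZMod 2) + 0 = 0 := by decide
  have h01 : (0 : ZMod 2) + 1 ≠ 0 := by decide
  have h10 : (1 : ZMod 2) + 0 ≠ 0 := by decide
  have pinP1 : ∀ a : ZMod m, pvec a ∈ V → a + 1 ∈ decSet m 3 G a := by
    intro a hp
    refine mem_decSet_of_vec G a (a + 1) (pvec a) (hV ▸ hp) ?_
      (by rw [pvec_apply_one hm]; exact one_ne) ?_
    · exact notin _ _ (D1 a (a + 1) (by push_cast; ring)).2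
        (fun h => (D2 (a - 1) (a + 1) (by push_cast; ring)).2 h)
        (fun h => (D3 (a - 2) (a + 1) (by push_cast; ring)).2 h)
    · intro x hx
      rcases pvec_supp hx with h | h
      · left; exact (mem_side_iff _ _).2 (Or.inl h)
      · exact Or.inr h
  have pinP2 : ∀ a : ZMod m, pvec a ∈ V → a ∈ decSet m 3 G (a + 3) := by
    intro a hp
    refine mem_decSet_of_vec G (a + 3) a (pvec a) (hV ▸ hp) ?_
      (by rw [pvec_apply_self hm]; exact one_ne) ?_
    · exact notin _ _ (D3 a (a + 3) (by push_cast; ring)).1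
        (fun h => (D2 a (a + 3 - 1) (by push_cast; ring)).1 h)
        (fun h => (D1 a (a + 3 - 2) (by push_cast; ring)).1 h)
    · intro x hx
      rcases pvec_supp hx with h | h
      · exact Or.inr h
      · left; exact (mem_side_iff _ _).2 (Or.inr (Or.inr (by rw [h]; ring)))
  have pinT1 : ∀ c : ZMod m, tvec c ∈ V → c + 2 ∈ decSet m 3 G (c + 1) := by
    intro c ht
    refine mem_decSet_of_vec G (c + 1) (c + 2) (tvec c) (hV ▸ ht) ?_
      (by rw [tvec_apply_2 hm]; exact one_ne) ?_
    · exact notin _ _ (D1 (c + 1) (c + 2) (by push_cast; ring)).2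
        (fun h => (D2 (c + 1 - 1) (c + 2) (by push_cast; ring)).2 h)
        (fun h => (D3 (c + 1 - 2) (c + 2) (by push_cast; ring)).2 h)
    · intro x hx
      rcases tvec_supp hx with h | h | h
      · left; exact (mem_side_iff _ _).2 (Or.inr (Or.inl (by rw [h]; ring)))
      · left; exact (mem_side_iff _ _).2 (Or.inl h)
      · exact Or.inr h
  have pinT2 : ∀ c : ZMod m, tvec c ∈ V → c ∈ decSet m 3 G (c + 3) := by
    intro c ht
    refine mem_decSet_of_vec G (c + 3) c (tvec c) (hV ▸ ht) ?_
      (by rw [tvec_apply_0 hm]; exact one_ne) ?_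
    · exact notin _ _ (D3 c (c + 3) (by push_cast; ring)).1
        (fun h => (D2 c (c + 3 - 1) (by push_cast; ring)).1 h)
        (fun h => (D1 c (c + 3 - 2) (by push_cast; ring)).1 h)
    · intro x hx
      rcases tvec_supp hx with h | h | h
      · exact Or.inr h
      · left; exact (mem_side_iff _ _).2 (Or.inr (Or.inr (by rw [h]; ring)))
      · left; exact (mem_side_iff _ _).2 (Or.inr (Or.inl (by rw [h]; ring)))
  -- conflict lemmas
  have hC1 : ∀ a : ZMod m, pvec a ∈ V → pvec (a + 1) ∈ V → False := by
    intro a h1 h2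
    apply hL2 a
    have heq : (Pi.single a (1 : ZMod 2) : ZMod m → ZMod 2) + Pi.single (a + 2) 1
        = pvec a + pvec (a + 1) := by
      funext x
      simp only [pvec, Pi.add_apply]
      rw [show a + 1 + 1 = a + 2 from by ring]
      generalize (Pi.single a (1 : ZMod 2) : ZMod m → ZMod 2) x = z1
      generalize (Pi.single (a + 1) (1 : ZMod 2) : ZMod m → ZMod 2) x = z2
      generalize (Pi.single (a + 2) (1 : ZMod 2) : ZMod m → ZMod 2) x = z3
      revert z1 z2 z3; decide
    rw [heq]
    exact Submodule.add_mem _ h1 h2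
  have hC50 : ∀ a : ZMod m, pvec a ∈ V → tvec a ∈ V → False := by
    intro a h1 h2
    apply hL1 (a + 2)
    have heq : (Pi.single (a + 2) (1 : ZMod 2) : ZMod m → ZMod 2) = pvec a + tvec a := by
      funext x
      simp only [pvec, tvec, Pi.add_apply]
      generalize (Pi.single a (1 : ZMod 2) : ZMod m → ZMod 2) x = z1
      generalize (Pi.single (a + 1) (1 : ZMod 2) : ZMod m → ZMod 2) x = z2
      generalize (Pi.single (a + 2) (1 : ZMod 2) : ZMod m → ZMod 2) x = z3
      revert z1 z2 z3; decide
    rw [heq]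
    exact Submodule.add_mem _ h1 h2
  have hC5m1 : ∀ a : ZMod m, pvec a ∈ V → tvec (a - 1) ∈ V → False := by
    intro a h1 h2
    apply hL1 (a - 1)
    have heq : (Pi.single (a - 1) (1 : ZMod 2) : ZMod m → ZMod 2) = pvec a + tvec (a - 1) := by
      funext x
      simp only [pvec, tvec, Pi.add_apply]
      rw [show a - 1 + 1 = a from by ring, show a - 1 + 2 = a + 1 from by ring]
      generalize (Pi.single (a - 1) (1 : ZMod 2) : ZMod m → ZMod 2) x = z1
      generalize (Pi.single a (1 : ZMod 2) : ZMod m → ZMod 2) x = z2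
      generalize (Pi.single (a + 1) (1 : ZMod 2) : ZMod m → ZMod 2) x = z3
      revert z1 z2 z3; decide
    rw [heq]
    exact Submodule.add_mem _ h1 h2
  have hC3 : ∀ c : ZMod m, tvec c ∈ V → tvec (c + 1) ∈ V → False := by
    intro c h1 h2
    have p1 := pinT1 c h1
    have p2 : c + 3 ∈ decSet m 3 G (c + 1) := by
      refine mem_decSet_of_vec G (c + 1) (c + 3) (tvec c + tvec (c + 1))
        (Submodule.add_mem _ (hV ▸ h1) (hV ▸ h2)) ?_ ?_ ?_
      · exact notin _ _ (fun h => (D2 (c + 1) (c + 3) (by push_cast; ring)).2 h)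
          (fun h => (D3 (c + 1 - 1) (c + 3) (by push_cast; ring)).2 h)
          (fun h => (D4 (c + 1 - 2) (c + 3) (by push_cast; ring)).2 h)
      · have ha : tvec c (c + 3) = 0 := tvec_apply_ne
          (D3 c (c + 3) (by push_cast; ring)).2
          (fun h => (D2 (c + 1) (c + 3) (by push_cast; ring)).2 h)
          (fun h => (D1 (c + 2) (c + 3) (by push_cast; ring)).2 h)
        have hb : tvec (c + 1) (c + 3) = 1 := by
          have := tvec_apply_2 hm (c + 1)
          rwa [show c + 1 + 2 = c + 3 from by ring] at this
        rw [Pi.add_apply, ha, hb]; exact h01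
      · intro x hx
        have hone : tvec c x ≠ 0 ∨ tvec (c + 1) x ≠ 0 := by
          by_contra hcc
          push_neg at hcc
          rw [Pi.add_apply, hcc.1, hcc.2] at hx
          exact hx hzadd
        have hx2 : x ≠ c + 2 := by
          intro he
          subst he
          have hb1 : tvec c (c + 2) = 1 := tvec_apply_2 hm c
          have hb2 : tvec (c + 1) (c + 2) = 1 := by
            have := tvec_apply_1 hm (c + 1)
            rwa [show c + 1 + 1 = c + 2 from by ring] at this
          rw [Pi.add_apply, hb1, hb2] at hx
          exact hx htwo
        rcases hone with h | h
        · rcases tvec_supp h with h' | h' | h'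
          · left; exact (mem_side_iff _ _).2 (Or.inr (Or.inl (by rw [h']; ring)))
          · left; exact (mem_side_iff _ _).2 (Or.inl h')
          · exact absurd h' hx2
        · rcases tvec_supp h with h' | h' | h'
          · left; exact (mem_side_iff _ _).2 (Or.inl h')
          · exact absurd (by rw [h']; ring) hx2
          · right; rw [h']; ring
    have hcon := hSec (c + 1) p2 p1
    exact (D1 (c + 2) (c + 3) (by push_cast; ring)).2 hcon
  have hC4 : ∀ c : ZMod m, tvec c ∈ V → tvec (c + 2) ∈ V → False := by
    intro c h1 h2
    have p1 := pinT2 c h1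
    have p2 := pinT1 (c + 2) h2
    rw [show c + 2 + 1 = c + 3 from by ring, show c + 2 + 2 = c + 4 from by ring] at p2
    have hcon := hSec (c + 3) p1 p2
    exact (D4 c (c + 4) (by push_cast; ring)).1 hcon
  have hC5p : ∀ a : ZMod m, pvec a ∈ V → tvec (a + 1) ∈ V → False := by
    intro a h1 h2
    have p1 := pinT2 (a + 1) h2
    rw [show a + 1 + 3 = a + 4 from by ring] at p1
    have p2 : a ∈ decSet m 3 G (a + 4) := by
      refine mem_decSet_of_vec G (a + 4) a (pvec a + tvec (a + 1))
        (Submodule.add_mem _ (hV ▸ h1) (hV ▸ h2)) ?_ ?_ ?_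
      · exact notin _ _ (D4 a (a + 4) (by push_cast; ring)).1
          (fun h => (D3 a (a + 4 - 1) (by push_cast; ring)).1 h)
          (fun h => (D2 a (a + 4 - 2) (by push_cast; ring)).1 h)
      · have ha : pvec a a = 1 := pvec_apply_self hm a
        have hb : tvec (a + 1) a = 0 := tvec_apply_ne
          (D1 a (a + 1) (by push_cast; ring)).1
          (fun h => (D2 a (a + 1 + 1) (by push_cast; ring)).1 h)
          (fun h => (D3 a (a + 1 + 2) (by push_cast; ring)).1 h)
        rw [Pi.add_apply, ha, hb]; exact h10
      · intro x hx
        have hone : pvec a x ≠ 0 ∨ tvec (a + 1) x ≠ 0 := by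
          by_contra hcc
          push_neg at hcc
          rw [Pi.add_apply, hcc.1, hcc.2] at hx
          exact hx hzadd
        have hx1 : x ≠ a + 1 := by
          intro he
          subst he
          have hb1 : pvec a (a + 1) = 1 := pvec_apply_one hm a
          have hb2 : tvec (a + 1) (a + 1) = 1 := tvec_apply_0 hm (a + 1)
          rw [Pi.add_apply, hb1, hb2] at hx
          exact hx htwo
        rcases hone with h | h
        · rcases pvec_supp h with h' | h'
          · exact Or.inr h'
          · exact absurd h' hx1
        · rcases tvec_supp h with h' | h' | h'
          · exact absurd h' hx1
          · left; exact (mem_side_iff _ _).2 (Or.inr (Or.inr (by rw [h']; ring)))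
          · left; exact (mem_side_iff _ _).2 (Or.inr (Or.inl (by rw [h']; ring)))
    have hcon := hSec (a + 4) p2 p1
    exact (D1 a (a + 1) (by push_cast; ring)).1 hcon
  have hC5m2 : ∀ a : ZMod m, pvec a ∈ V → tvec (a - 2) ∈ V → False := by
    intro a h1 h2
    have p1 := pinT1 (a - 2) h2
    rw [show a - 2 + 1 = a - 1 from by ring, show a - 2 + 2 = a from by ring] at p1
    have p2 : a + 1 ∈ decSet m 3 G (a - 1) := by
      refine mem_decSet_of_vec G (a - 1) (a + 1) (pvec a + tvec (a - 2))
        (Submodule.add_mem _ (hV ▸ h1) (hV ▸ h2)) ?_ ?_ ?_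
      · exact notin _ _ (fun h => (D2 (a - 1) (a + 1) (by push_cast; ring)).2 h)
          (fun h => (D3 (a - 1 - 1) (a + 1) (by push_cast; ring)).2 h)
          (fun h => (D4 (a - 1 - 2) (a + 1) (by push_cast; ring)).2 h)
      · have ha : pvec a (a + 1) = 1 := pvec_apply_one hm a
        have hb : tvec (a - 2) (a + 1) = 0 := tvec_apply_ne
          (fun h => (D3 (a - 2) (a + 1) (by push_cast; ring)).2 h)
          (fun h => (D2 (a - 2 + 1) (a + 1) (by push_cast; ring)).2 h)
          (fun h => (D1 (a - 2 + 2) (a + 1) (by push_cast; ring)).2 h)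
        rw [Pi.add_apply, ha, hb]; exact h10
      · intro x hx
        have hone : pvec a x ≠ 0 ∨ tvec (a - 2) x ≠ 0 := by
          by_contra hcc
          push_neg at hcc
          rw [Pi.add_apply, hcc.1, hcc.2] at hx
          exact hx hzadd
        have hxa : x ≠ a := by
          intro he
          subst he
          have hb1 : pvec x x = 1 := pvec_apply_self hm x
          have hb2 : tvec (x - 2) x = 1 := by
            have := tvec_apply_2 hm (x - 2)
            rwa [show x - 2 + 2 = x from by ring] at this
          rw [Pi.add_apply, hb1, hb2] at hx
          exact hx htwo
        rcases hone with h | h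
        · rcases pvec_supp h with h' | h'
          · exact absurd h' hxa
          · exact Or.inr h'
        · rcases tvec_supp h with h' | h' | h'
          · left; exact (mem_side_iff _ _).2 (Or.inr (Or.inl (by rw [h']; ring)))
          · left; exact (mem_side_iff _ _).2 (Or.inl (by rw [h']; ring))
          · exact absurd (by rw [h']; ring) hxa
    have hcon := hSec (a - 1) p2 p1
    exact (D1 a (a + 1) (by push_cast; ring)).2 hcon
  -- serving lemma
  have hserve : ∀ i : ZMod m,
      pvec i ∈ V ∨ tvec (i - 1) ∈ V ∨ pvec (i - 3) ∈ V ∨ tvec (i - 3) ∈ V := by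
    intro i
    obtain ⟨j, hjd⟩ := hCor i
    have hjA : j ∉ sideInfo m 3 i := hjd.1
    obtain ⟨v, hv, hvj, hvsupp⟩ := exists_vec_of_mem_decSet hjd
    obtain ⟨cf, hcf⟩ := (Submodule.mem_span_range_iff_exists_fun (ZMod 2)).mp hv
    set s : Finset (Fin ℓ) := Finset.univ.filter (fun t => cf t = 1) with hs
    have hsum : ∑ t ∈ s, G t = v := by
      rw [← hcf]
      rw [← Finset.sum_filter_add_sum_filter_not Finset.univ (fun t => cf t = 1)
        (fun t => cf t • G t)]
      have e1 : ∑ t ∈ Finset.univ.filter (fun t => cf t = 1), cf t • G t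
          = ∑ t ∈ s, G t :=
        Finset.sum_congr rfl (fun t ht => by rw [(Finset.mem_filter.1 ht).2, one_smul])
      have e2 : ∑ t ∈ Finset.univ.filter (fun t => ¬ cf t = 1), cf t • G t = 0 :=
        Finset.sum_eq_zero (fun t ht => by
          have h0 : cf t = 0 := by
            have := (Finset.mem_filter.1 ht).2
            revert this; generalize cf t = z; revert z; decide
          rw [h0, zero_smul])
      rw [e1, e2, add_zero]
    set Wod : Finset (ZMod m → ZMod 2) :=
      (s.image G).filter (fun w => ¬ (2 ∣ (s.filter (fun t => G t = w)).card)) with hWod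
    have hsum2 : ∑ w ∈ Wod, w = v := by
      have hfib : ∑ w ∈ s.image G, ∑ t ∈ s.filter (fun t => G t = w), G t = ∑ t ∈ s, G t :=
        Finset.sum_fiberwise_of_maps_to (fun t ht => Finset.mem_image_of_mem G ht) _
      have hinner : ∀ w ∈ s.image G, ∑ t ∈ s.filter (fun t => G t = w), G t
          = (((s.filter (fun t => G t = w)).card : ZMod 2)) • w := by
        intro w _
        rw [Finset.sum_congr rfl (fun t ht => (Finset.mem_filter.1 ht).2), Finset.sum_const]
        rw [Nat.cast_smul_eq_nsmul]
      have h1 : ∑ w ∈ s.image G, (((s.filter (fun t => G t = w)).card : ZMod 2)) • w = v := by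
        rw [← hsum, ← hfib]
        exact (Finset.sum_congr rfl hinner).symm
      rw [← h1]
      rw [← Finset.sum_filter_add_sum_filter_not (s.image G)
        (fun w => ¬ (2 ∣ (s.filter (fun t => G t = w)).card))
        (fun w => (((s.filter (fun t => G t = w)).card : ZMod 2)) • w)]
      have hodd : ∀ w ∈ (s.image G).filter
          (fun w => ¬ (2 ∣ (s.filter (fun t => G t = w)).card)),
          (((s.filter (fun t => G t = w)).card : ZMod 2)) • w = w := by
        intro w hw
        have hnd := (Finset.mem_filter.1 hw).2
        have hne0 : (((s.filter (fun t => G t = w)).card : ZMod 2)) ≠ 0 := by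
          rw [Ne, ZMod.natCast_eq_zero_iff]
          exact hnd
        have hone : (((s.filter (fun t => G t = w)).card : ZMod 2)) = 1 := by
          revert hne0; generalize (((s.filter (fun t => G t = w)).card : ZMod 2)) = z
          revert z; decide
        rw [hone, one_smul]
      have heven : ∑ w ∈ (s.image G).filter
          (fun w => ¬¬ (2 ∣ (s.filter (fun t => G t = w)).card)),
          (((s.filter (fun t => G t = w)).card : ZMod 2)) • w = 0 :=
        Finset.sum_eq_zero (fun w hw => by
          have hd := not_not.mp (Finset.mem_filter.1 hw).2
          have : (((s.filter (fun t => G t = w)).card : ZMod 2)) = 0 :=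
            (ZMod.natCast_eq_zero_iff _ 2).mpr hd
          rw [this, zero_smul])
      rw [Finset.sum_congr rfl hodd, heven, add_zero]
    have hgex : ∃ g ∈ Wod, g j ≠ 0 := by
      by_contra hc
      push_neg at hc
      have : v j = 0 := by
        rw [← hsum2, Finset.sum_apply]
        exact Finset.sum_eq_zero (fun w hw => hc w hw)
      exact hvj this
    obtain ⟨g, hgW, hgj⟩ := hgex
    have hrowV : ∀ w ∈ Wod, w ∈ V := by
      intro w hw
      obtain ⟨t₁, _, ht₁⟩ := Finset.mem_image.1 (Finset.mem_filter.1 hw).1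
      rw [← ht₁]
      exact Submodule.subset_span ⟨t₁, rfl⟩
    have hrcl : ∀ w ∈ Wod, w = 0 ∨ (∃ a, w = pvec a) ∨ (∃ c, w = tvec c) := by
      intro w hw
      obtain ⟨t₁, _, ht₁⟩ := Finset.mem_image.1 (Finset.mem_filter.1 hw).1
      obtain ⟨i₀, hi₀⟩ := hG t₁
      refine rowclass w (hrowV w hw) i₀ (fun x hx => hi₀ ?_)
      rw [Function.mem_support, ht₁]
      exact hx
    have hsuppg : ∀ x, g x ≠ 0 → x ∈ sideInfo m 3 i ∨ x = j := by
      intro x hgx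
      have hvx : v x = g x + ∑ w ∈ Wod.erase g, w x := by
        rw [← hsum2, Finset.sum_apply]
        exact (Finset.add_sum_erase Wod (fun w => w x) hgW).symm
      have hrest : ∀ w ∈ Wod.erase g, w x = 0 := by
        intro w hw
        have hwW : w ∈ Wod := Finset.mem_of_mem_erase hw
        have hwg : w ≠ g := Finset.ne_of_mem_erase hw
        by_contra hwx
        rcases hrcl g hgW with hg0 | ⟨a, hga⟩ | ⟨c, hgc⟩
        · rw [hg0] at hgx; exact hgx rfl
        · rcases hrcl w hwW with hw0 | ⟨b, hwb⟩ | ⟨c', hwc⟩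
          · rw [hw0] at hwx; exact hwx rfl
          · -- pvec a vs pvec b
            rcases pvec_supp (hga ▸ hgx) with hxa | hxa <;>
              rcases pvec_supp (hwb ▸ hwx) with hxb | hxb
            · exact hwg (by rw [hwb, hga, show b = a from by linear_combination hxa - hxb])
            · exact hC1 b (hwb ▸ hrowV w hwW)
                (by rw [show b + 1 = a from by linear_combination hxa - hxb]; exact hga ▸ hrowV g hgW)
            · exact hC1 a (hga ▸ hrowV g hgW)
                (by rw [show a + 1 = b from by linear_combination hxb - hxa]; exact hwb ▸ hrowV w hwW)
            · exact hwg (by rw [hwb, hga, show b = a from by linear_combination hxa - hxb])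
          · -- pvec a vs tvec c'
            rcases pvec_supp (hga ▸ hgx) with hxa | hxa <;>
              rcases tvec_supp (hwc ▸ hwx) with hxc | hxc | hxc
            · exact hC50 a (hga ▸ hrowV g hgW)
                (by rw [show a = c' from by linear_combination hxc - hxa]; exact hwc ▸ hrowV w hwW)
            · exact hC5m1 a (hga ▸ hrowV g hgW)
                (by rw [show a - 1 = c' from by linear_combination hxc - hxa]; exact hwc ▸ hrowV w hwW)
            · exact hC5m2 a (hga ▸ hrowV g hgW)
                (by rw [show a - 2 = c' from by linear_combination hxc - hxa]; exact hwc ▸ hrowV w hwW)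
            · exact hC5p a (hga ▸ hrowV g hgW)
                (by rw [show a + 1 = c' from by linear_combination hxc - hxa]; exact hwc ▸ hrowV w hwW)
            · exact hC50 a (hga ▸ hrowV g hgW)
                (by rw [show a = c' from by linear_combination hxc - hxa]; exact hwc ▸ hrowV w hwW)
            · exact hC5m1 a (hga ▸ hrowV g hgW)
                (by rw [show a - 1 = c' from by linear_combination hxc - hxa]; exact hwc ▸ hrowV w hwW)
        · rcases hrcl w hwW with hw0 | ⟨b, hwb⟩ | ⟨c', hwc⟩
          · rw [hw0] at hwx; exact hwx rfl
          · -- tvec c vs pvec b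
            rcases tvec_supp (hgc ▸ hgx) with hxc | hxc | hxc <;>
              rcases pvec_supp (hwb ▸ hwx) with hxb | hxb
            · exact hC50 b (hwb ▸ hrowV w hwW)
                (by rw [show b = c from by linear_combination hxc - hxb]; exact hgc ▸ hrowV g hgW)
            · exact hC5p b (hwb ▸ hrowV w hwW)
                (by rw [show b + 1 = c from by linear_combination hxc - hxb]; exact hgc ▸ hrowV g hgW)
            · exact hC5m1 b (hwb ▸ hrowV w hwW)
                (by rw [show b - 1 = c from by linear_combination hxc - hxb]; exact hgc ▸ hrowV g hgW)
            · exact hC50 b (hwb ▸ hrowV w hwW)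
                (by rw [show b = c from by linear_combination hxc - hxb]; exact hgc ▸ hrowV g hgW)
            · exact hC5m2 b (hwb ▸ hrowV w hwW)
                (by rw [show b - 2 = c from by linear_combination hxc - hxb]; exact hgc ▸ hrowV g hgW)
            · exact hC5m1 b (hwb ▸ hrowV w hwW)
                (by rw [show b - 1 = c from by linear_combination hxc - hxb]; exact hgc ▸ hrowV g hgW)
          · -- tvec c vs tvec c'
            rcases tvec_supp (hgc ▸ hgx) with hxc | hxc | hxc <;>
              rcases tvec_supp (hwc ▸ hwx) with hxd | hxd | hxd
            · exact hwg (by rw [hwc, hgc, show c' = c from by linear_combination hxc - hxd])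
            · exact hC3 c' (hwc ▸ hrowV w hwW)
                (by rw [show c' + 1 = c from by linear_combination hxc - hxd]; exact hgc ▸ hrowV g hgW)
            · exact hC4 c' (hwc ▸ hrowV w hwW)
                (by rw [show c' + 2 = c from by linear_combination hxc - hxd]; exact hgc ▸ hrowV g hgW)
            · exact hC3 c (hgc ▸ hrowV g hgW)
                (by rw [show c + 1 = c' from by linear_combination hxd - hxc]; exact hwc ▸ hrowV w hwW)
            · exact hwg (by rw [hwc, hgc, show c' = c from by linear_combination hxc - hxd])
            · exact hC3 c' (hwc ▸ hrowV w hwW)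
                (by rw [show c' + 1 = c from by linear_combination hxc - hxd]; exact hgc ▸ hrowV g hgW)
            · exact hC4 c (hgc ▸ hrowV g hgW)
                (by rw [show c + 2 = c' from by linear_combination hxd - hxc]; exact hwc ▸ hrowV w hwW)
            · exact hC3 c (hgc ▸ hrowV g hgW)
                (by rw [show c + 1 = c' from by linear_combination hxd - hxc]; exact hwc ▸ hrowV w hwW)
            · exact hwg (by rw [hwc, hgc, show c' = c from by linear_combination hxc - hxd])
      rw [Finset.sum_eq_zero hrest, add_zero] at hvx
      exact hvsupp x (by rw [hvx]; exact hgx)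
    -- final analysis on g
    rcases hrcl g hgW with hg0 | ⟨a, hga⟩ | ⟨c, hgc⟩
    · rw [hg0] at hgj; exact absurd rfl hgj
    · subst hga
      rcases pvec_supp hgj with hja | hja
      · -- j = a : then a+1 in supp
        have h1 : pvec a (a + 1) ≠ 0 := by rw [pvec_apply_one hm]; exact one_ne
        rcases hsuppg (a + 1) h1 with hside | heq
        · rcases (mem_side_iff _ _).1 hside with h | h | h
          · exact absurd ((mem_side_iff _ _).2 (Or.inr (Or.inl (by rw [hja]; linear_combination h)))) hjA
          · exact absurd ((mem_side_iff _ _).2 (Or.inr (Or.inr (by rw [hja]; linear_combination h)))) hjA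
          · right; right; left
            rw [show i - 3 = a from by linear_combination -h]
            exact hrowV _ hgW
        · exact absurd (hja ▸ heq) (D1 a (a + 1) (by push_cast; ring)).2
      · -- j = a + 1 : then a in supp
        have h1 : pvec a a ≠ 0 := by rw [pvec_apply_self hm]; exact one_ne
        rcases hsuppg a h1 with hside | heq
        · rcases (mem_side_iff _ _).1 hside with h | h | h
          · left; rw [← h]; exact hrowV _ hgW
          · exact absurd ((mem_side_iff _ _).2 (Or.inl (by rw [hja]; linear_combination h))) hjA
          · exact absurd ((mem_side_iff _ _).2 (Or.inr (Or.inl (by rw [hja]; linear_combination h)))) hjA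
        · exact absurd (hja ▸ heq) (D1 a (a + 1) (by push_cast; ring)).1
    · subst hgc
      rcases tvec_supp hgj with hjc | hjc | hjc
      · -- j = c : then c+1 in supp
        have h1 : tvec c (c + 1) ≠ 0 := by rw [tvec_apply_1 hm]; exact one_ne
        rcases hsuppg (c + 1) h1 with hside | heq
        · rcases (mem_side_iff _ _).1 hside with h | h | h
          · exact absurd ((mem_side_iff _ _).2 (Or.inr (Or.inl (by rw [hjc]; linear_combination h)))) hjA
          · exact absurd ((mem_side_iff _ _).2 (Or.inr (Or.inr (by rw [hjc]; linear_combination h)))) hjA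
          · right; right; right
            rw [show i - 3 = c from by linear_combination -h]
            exact hrowV _ hgW
        · exact absurd (hjc ▸ heq) (D1 c (c + 1) (by push_cast; ring)).2
      · -- j = c + 1 : then c in supp
        have h1 : tvec c c ≠ 0 := by rw [tvec_apply_0 hm]; exact one_ne
        rcases hsuppg c h1 with hside | heq
        · rcases (mem_side_iff _ _).1 hside with h | h | h
          · -- c = i : then c+2 in supp leads to contradictions
            exfalso
            have h2 : tvec c (c + 2) ≠ 0 := by rw [tvec_apply_2 hm]; exact one_ne
            rcases hsuppg (c + 2) h2 with hside2 | heq2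
            · rcases (mem_side_iff _ _).1 hside2 with h' | h' | h'
              · exact (D2 c (c + 2) (by push_cast; ring)).2 (by rw [h', ← h])
              · exact (D3 (c - 1) (c + 2) (by push_cast; ring)).2 (by rw [h', ← h])
              · exact (D4 (c - 2) (c + 2) (by push_cast; ring)).2 (by rw [h', ← h])
            · exact (D1 (c + 1) (c + 2) (by push_cast; ring)).2 (heq2.trans hjc)
          · exact absurd ((mem_side_iff _ _).2 (Or.inl (by rw [hjc]; linear_combination h))) hjA
          · exact absurd ((mem_side_iff _ _).2 (Or.inr (Or.inl (by rw [hjc]; linear_combination h)))) hjA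
        · exact absurd (hjc ▸ heq) (D1 c (c + 1) (by push_cast; ring)).1
      · -- j = c + 2 : then c in supp
        have h1 : tvec c c ≠ 0 := by rw [tvec_apply_0 hm]; exact one_ne
        rcases hsuppg c h1 with hside | heq
        · rcases (mem_side_iff _ _).1 hside with h | h | h
          · -- c = i : then c+1 in supp leads to contradictions
            exfalso
            have h2 : tvec c (c + 1) ≠ 0 := by rw [tvec_apply_1 hm]; exact one_ne
            rcases hsuppg (c + 1) h2 with hside2 | heq2
            · rcases (mem_side_iff _ _).1 hside2 with h' | h' | h'
              · exact (D1 c (c + 1) (by push_cast; ring)).2 (by rw [h', ← h])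
              · exact (D2 (c - 1) (c + 1) (by push_cast; ring)).2 (by rw [h', ← h])
              · exact (D3 (c - 2) (c + 1) (by push_cast; ring)).2 (by rw [h', ← h])
            · exact (D1 (c + 1) (c + 2) (by push_cast; ring)).1 (heq2.trans hjc)
          · right; left
            rw [show i - 1 = c from by linear_combination -h]
            exact hrowV _ hgW
          · exact absurd ((mem_side_iff _ _).2 (Or.inl (by rw [hjc]; linear_combination h))) hjA
        · exact absurd (hjc ▸ heq) (D2 c (c + 2) (by push_cast; ring)).1
  -- counting
  set S : Finset (ZMod m) := Finset.univ.filter (fun x => pvec x ∈ V ∨ tvec x ∈ V) with hSdef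
  have hSadj : ∀ x : ZMod m, x ∈ S → x + 1 ∈ S → False := by
    intro x hx hx1
    have h1 := (Finset.mem_filter.1 hx).2
    have h2 := (Finset.mem_filter.1 hx1).2
    rcases h1 with h1 | h1 <;> rcases h2 with h2 | h2
    · exact hC1 x h1 h2
    · exact hC5p x h1 h2
    · exact hC5m1 (x + 1) h2 (by rw [show x + 1 - 1 = x from by ring]; exact h1)
    · exact hC3 x h1 h2
  have hcard2 : S.card + S.card ≤ m := by
    have hinj : (S.image (fun x => x + 1)).card = S.card :=
      Finset.card_image_of_injective _ (add_left_injective 1)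
    have hdisj : Disjoint S (S.image (fun x => x + 1)) := by
      rw [Finset.disjoint_right]
      intro y hy hyS
      obtain ⟨x, hx, rfl⟩ := Finset.mem_image.1 hy
      exact hSadj x hx hyS
    have hcu := Finset.card_union_of_disjoint hdisj
    have hle : (S ∪ S.image (fun x => x + 1)).card ≤ (Finset.univ : Finset (ZMod m)).card :=
      Finset.card_le_univ _
    rw [hcu, hinj, Finset.card_univ, ZMod.card] at hle
    exact hle
  have hmle : m ≤ S.card + S.card := by
    set F : ZMod m → ZMod m × Bool := fun i =>
      if pvec i ∈ V then (i, true)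
      else if tvec (i - 1) ∈ V then (i - 1, true) else (i - 3, false) with hF
    have hmaps : ∀ x ∈ (Finset.univ : Finset (ZMod m)),
        F x ∈ S ×ˢ (Finset.univ : Finset Bool) := by
      intro x _
      simp only [hF]
      by_cases h1 : pvec x ∈ V
      · rw [if_pos h1]
        exact Finset.mem_product.2 ⟨Finset.mem_filter.2 ⟨Finset.mem_univ _, Or.inl h1⟩,
          Finset.mem_univ _⟩
      rw [if_neg h1]
      by_cases h2 : tvec (x - 1) ∈ V
      · rw [if_pos h2]
        exact Finset.mem_product.2 ⟨Finset.mem_filter.2 ⟨Finset.mem_univ _, Or.inr h2⟩,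
          Finset.mem_univ _⟩
      rw [if_neg h2]
      rcases hserve x with h | h | h | h
      · exact absurd h h1
      · exact absurd h h2
      · exact Finset.mem_product.2 ⟨Finset.mem_filter.2 ⟨Finset.mem_univ _, Or.inl h⟩,
          Finset.mem_univ _⟩
      · exact Finset.mem_product.2 ⟨Finset.mem_filter.2 ⟨Finset.mem_univ _, Or.inr h⟩,
          Finset.mem_univ _⟩
    have hinj : Set.InjOn F ((Finset.univ : Finset (ZMod m)) : Set (ZMod m)) := by
      intro x _ y _ hxy
      simp only [hF] at hxy
      by_cases hx1 : pvec x ∈ V <;> by_cases hy1 : pvec y ∈ V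
      · rw [if_pos hx1, if_pos hy1] at hxy
        exact congrArg Prod.fst hxy
      · rw [if_pos hx1, if_neg hy1] at hxy
        by_cases hy2 : tvec (y - 1) ∈ V
        · rw [if_pos hy2] at hxy
          have hfst : x = y - 1 := congrArg Prod.fst hxy
          exact absurd (hfst ▸ hy2) (fun hc => hC50 x hx1 hc)
        · rw [if_neg hy2] at hxy
          have := congrArg Prod.snd hxy
          simp at this
      · rw [if_neg hx1, if_pos hy1] at hxy
        by_cases hx2 : tvec (x - 1) ∈ V
        · rw [if_pos hx2] at hxy
          have hfst : x - 1 = y := congrArg Prod.fst hxy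
          exact absurd (hfst ▸ hx2) (fun hc => hC50 y hy1 hc)
        · rw [if_neg hx2] at hxy
          have := congrArg Prod.snd hxy
          simp at this
      · rw [if_neg hx1, if_neg hy1] at hxy
        by_cases hx2 : tvec (x - 1) ∈ V <;> by_cases hy2 : tvec (y - 1) ∈ V
        · rw [if_pos hx2, if_pos hy2] at hxy
          have hfst : x - 1 = y - 1 := congrArg Prod.fst hxy
          linear_combination hfst
        · rw [if_pos hx2, if_neg hy2] at hxy
          have := congrArg Prod.snd hxy
          simp at this
        · rw [if_neg hx2, if_pos hy2] at hxy
          have := congrArg Prod.snd hxy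
          simp at this
        · rw [if_neg hx2, if_neg hy2] at hxy
          have hfst : x - 3 = y - 3 := congrArg Prod.fst hxy
          linear_combination hfst
    have hcle := Finset.card_le_card_of_injOn F hmaps hinj
    rw [Finset.card_univ, ZMod.card, Finset.card_product] at hcle
    have : (Finset.univ : Finset Bool).card = 2 := rfl
    rw [this] at hcle
    omega
  obtain ⟨q, hq⟩ := hodd
  omega
end

section
/- For every odd integer m ≥ 5 the (m, m−2) secure decentralized pliable index coding problem with circular side information is not linearly feasible: for every length ℓ and every decentralized linear code G of length ℓ for parameters (m, s = m − 2), G is not simultaneously correct and secure. -/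
namespace SDPicod

lemma sideInfo_char (m : ℕ) (hm : 5 ≤ m) (i : ZMod m) (j : ZMod m) :
    j ∈ sideInfo m (m - 2) i ↔ (j ≠ i + 1 ∧ j ≠ i + 2) := by
  haveI : NeZero m := ⟨by omega⟩
  have hm1 : ((m - 1 : ℕ) : ZMod m) = -1 := by
    have : ((m - 1 : ℕ) : ZMod m) = (m : ZMod m) - 1 := by
      push_cast [Nat.cast_sub (by omega : 1 ≤ m)]; ring
    rw [this, ZMod.natCast_self]; ring
  have hm2 : ((m - 2 : ℕ) : ZMod m) = -2 := by
    have : ((m - 2 : ℕ) : ZMod m) = (m : ZMod m) - 2 := by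
      push_cast [Nat.cast_sub (by omega : 2 ≤ m)]; ring
    rw [this, ZMod.natCast_self]; ring
  constructor
  · rintro ⟨k, hk, rfl⟩
    rw [Finset.mem_range] at hk
    constructor
    · intro h
      have h1 : (k : ZMod m) = ((m - 1 : ℕ) : ZMod m) := by
        rw [hm1]; linear_combination i - h
      rw [ZMod.natCast_eq_natCast_iff] at h1
      have := Nat.ModEq.eq_of_lt_of_lt h1 (by omega) (by omega)
      omega
    · intro h
      have h1 : (k : ZMod m) = ((m - 2 : ℕ) : ZMod m) := by
        rw [hm2]; linear_combination i - h
      rw [ZMod.natCast_eq_natCast_iff] at h1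
      have := Nat.ModEq.eq_of_lt_of_lt h1 (by omega) (by omega)
      omega
  · rintro ⟨h1, h2⟩
    refine ⟨(i - j).val, Finset.mem_range.2 ?_, ?_⟩
    · have hlt : (i - j).val < m := ZMod.val_lt _
      have hne1 : (i - j).val ≠ m - 1 := by
        intro h
        apply h1
        have : ((i - j).val : ZMod m) = i - j := ZMod.natCast_rightInverse _
        rw [h, hm1] at this
        linear_combination this
      have hne2 : (i - j).val ≠ m - 2 := by
        intro h
        apply h2
        have : ((i - j).val : ZMod m) = i - j := ZMod.natCast_rightInverse _
        rw [h, hm2] at this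
        linear_combination this
      omega
    · have : ((i - j).val : ZMod m) = i - j := ZMod.natCast_rightInverse _
      linear_combination this

lemma eval_zero_of_col_zero (m s : ℕ) {ℓ : ℕ} (G : Fin ℓ → ZMod m → ZMod 2)
    (i a : ZMod m) (ha : a ∉ sideInfo m s i) (hcol : ∀ t, G t a = 0)
    {v : ZMod m → ZMod 2}
    (hv : v ∈ Submodule.span (ZMod 2)
      (Set.range G ∪ {w | ∃ k ∈ sideInfo m s i, w = Pi.single k (1 : ZMod 2)})) :
    v a = 0 := by
  have hle : Submodule.span (ZMod 2)
      (Set.range G ∪ {w | ∃ k ∈ sideInfo m s i, w = Pi.single k (1 : ZMod 2)}) ≤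
      LinearMap.ker (LinearMap.proj a :
        (ZMod m → ZMod 2) →ₗ[ZMod 2] ZMod 2) := by
    rw [Submodule.span_le]
    rintro w (⟨t, rfl⟩ | ⟨k, hk, rfl⟩)
    · simpa using hcol t
    · have : k ≠ a := fun h => ha (h ▸ hk)
      simp [LinearMap.mem_ker, Pi.single_eq_of_ne (Ne.symm this)]
  simpa using hle hv

lemma single_mem_span (m s : ℕ) {ℓ : ℕ} (G : Fin ℓ → ZMod m → ZMod 2)
    [NeZero m] (i a b : ZMod m)
    (hmem : ∀ k : ZMod m, k ∈ sideInfo m s i ↔ (k ≠ a ∧ k ≠ b))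
    (ha : Pi.single a (1 : ZMod 2) ∈ Submodule.span (ZMod 2)
      (Set.range G ∪ {w | ∃ k ∈ sideInfo m s i, w = Pi.single k (1 : ZMod 2)}))
    (t : Fin ℓ) (hb : G t b ≠ 0) :
    Pi.single b (1 : ZMod 2) ∈ Submodule.span (ZMod 2)
      (Set.range G ∪ {w | ∃ k ∈ sideInfo m s i, w = Pi.single k (1 : ZMod 2)}) := by
  set S := Submodule.span (ZMod 2)
      (Set.range G ∪ {w | ∃ k ∈ sideInfo m s i, w = Pi.single k (1 : ZMod 2)}) with hS
  have hb1 : G t b = 1 := by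
    have : ∀ x : ZMod 2, x ≠ 0 → x = 1 := by decide
    exact this _ hb
  have hsum : ∑ j : ZMod m, Pi.single j (G t j) = G t := Finset.univ_sum_single (G t)
  have hsplit : (∑ j ∈ Finset.univ.erase b, Pi.single j (G t j)) + Pi.single b (G t b)
      = G t := by
    rw [Finset.sum_erase_add _ _ (Finset.mem_univ b)]
    exact hsum
  have hdecomp : Pi.single b (1 : ZMod 2) =
      G t - ∑ j ∈ Finset.univ.erase b, Pi.single j (G t j) := by
    rw [← hb1]
    exact eq_sub_of_add_eq' hsplit
  rw [hdecomp]
  apply sub_mem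
  · exact Submodule.subset_span (Or.inl ⟨t, rfl⟩)
  · apply Submodule.sum_mem
    intro j hj
    have hjb : j ≠ b := Finset.ne_of_mem_erase hj
    have hsingle : Pi.single j (G t j) = (G t j) • (Pi.single j (1 : ZMod 2) : ZMod m → ZMod 2) := by
      ext x
      by_cases h : x = j <;> simp [h, Pi.single_apply]
    rw [hsingle]
    by_cases hja : j = a
    · subst hja; exact Submodule.smul_mem _ _ ha
    · exact Submodule.smul_mem _ _
        (Submodule.subset_span (Or.inr ⟨j, (hmem j).2 ⟨hja, hjb⟩, rfl⟩))

end SDPicod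

open SDPicod

theorem infeasible_s_eq_m_sub_two_odd (m : ℕ) (hm : 5 ≤ m) (hodd : Odd m)
    (ℓ : ℕ) (G : Fin ℓ → ZMod m → ZMod 2)
    (hG : IsDecentralizedCode m (m - 2) G) :
    ¬ (Correct m (m - 2) G ∧ Secure m (m - 2) G) := by
  rintro ⟨hcor, hsec⟩
  haveI : NeZero m := ⟨by omega⟩
  set Z : ZMod m → Prop := fun j => ∀ t, G t j = 0 with hZ
  have h12 : ∀ i : ZMod m, (i + 1 : ZMod m) ≠ i + 2 := by
    intro i h
    have h' : ((1 : ℕ) : ZMod m) = ((2 : ℕ) : ZMod m) := by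
      push_cast
      linear_combination h - i
    rw [ZMod.natCast_eq_natCast_iff] at h'
    have := Nat.ModEq.eq_of_lt_of_lt h' (by omega) (by omega)
    omega
  have key : ∀ i : ZMod m, (Z (i + 1) ↔ ¬ Z (i + 2)) := by
    intro i
    have hside := sideInfo_char m hm i
    obtain ⟨j, hjs, hjspan⟩ := hcor i
    have hj' : j = i + 1 ∨ j = i + 2 := by
      by_contra hc
      push_neg at hc
      exact hjs ((hside j).2 hc)
    have hone : ∀ a : ZMod m, a ∉ sideInfo m (m - 2) i →
        Pi.single a (1 : ZMod 2) ∈ Submodule.span (ZMod 2)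
          (Set.range G ∪ {w | ∃ k ∈ sideInfo m (m-2) i, w = Pi.single k (1 : ZMod 2)}) →
        ¬ Z a := by
      intro a hma hspan hz
      have := eval_zero_of_col_zero m (m - 2) G i a hma hz hspan
      simp at this
    rcases hj' with rfl | rfl
    · -- decodes i+1 : column i+1 nonzero, column i+2 zero
      have hn1 : ¬ Z (i + 1) := hone _ hjs hjspan
      have hz2 : Z (i + 2) := by
        intro t
        by_contra hne
        have hmem : ∀ k : ZMod m, k ∈ sideInfo m (m-2) i ↔ (k ≠ i + 1 ∧ k ≠ i + 2) :=
          hside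
        have h2 := single_mem_span m (m - 2) G i (i + 1) (i + 2) hmem hjspan t hne
        have hd2 : (i + 2 : ZMod m) ∈ decSet m (m - 2) G i :=
          ⟨fun h => ((hside _).1 h).2 rfl, h2⟩
        have hd1 : (i + 1 : ZMod m) ∈ decSet m (m - 2) G i := ⟨hjs, hjspan⟩
        exact h12 i (hsec i hd1 hd2)
      tauto
    · -- decodes i+2 : column i+2 nonzero, column i+1 zero
      have hn2 : ¬ Z (i + 2) := hone _ hjs hjspan
      have hz1 : Z (i + 1) := by
        intro t
        by_contra hne
        have hmem : ∀ k : ZMod m, k ∈ sideInfo m (m-2) i ↔ (k ≠ i + 2 ∧ k ≠ i + 1) := by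
          intro k; rw [hside k]; tauto
        have h1 := single_mem_span m (m - 2) G i (i + 2) (i + 1) hmem hjspan t hne
        have hd1 : (i + 1 : ZMod m) ∈ decSet m (m - 2) G i :=
          ⟨fun h => ((hside _).1 h).1 rfl, h1⟩
        have hd2 : (i + 2 : ZMod m) ∈ decSet m (m - 2) G i := ⟨hjs, hjspan⟩
        exact h12 i (hsec i hd1 hd2)
      tauto
  have key' : ∀ j : ZMod m, Z j ↔ ¬ Z (j + 1) := by
    intro j
    have := key (j - 1)
    rwa [show (j - 1 + 1 : ZMod m) = j by ring,
      show (j - 1 + 2 : ZMod m) = j + 1 by ring] at this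
  have hind : ∀ n : ℕ, ((Z ((n : ZMod m)) ↔ Z 0) ↔ Even n) := by
    intro n
    induction n with
    | zero => simp
    | succ n ih =>
      have h := key' ((n : ZMod m))
      rw [Nat.even_add_one, ← ih]
      push_cast
      tauto
  have hfin := hind m
  rw [ZMod.natCast_self] at hfin
  simp [Nat.not_even_iff_odd.2 hodd] at hfin
end

section
/- For all integers m, s with s ≥ 5, m ≥ 4s and 2s dividing m, there exists a decentralized linear code of length ℓ = 3·m/(2·s) for parameters (m, s) that is both correct and secure. -/
namespace SDP2

/-- residue of `x` modulo `2*s` -/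
def R (m s : ℕ) (x : ZMod m) : ℕ := x.val % (2*s)

/-- partner of a support point -/
def partner (m s : ℕ) (x : ZMod m) : ZMod m :=
  if R m s x = 0 ∨ R m s x = s+1 then x + ((1:ℕ) : ZMod m)
  else if R m s x = 1 ∨ R m s x = s+2 then x - ((1:ℕ) : ZMod m)
  else if R m s x = 2 then x + ((s-2 : ℕ) : ZMod m)
  else if R m s x = s then x - ((s-2 : ℕ) : ZMod m)
  else x

def isSP (m s : ℕ) (x : ZMod m) : Prop :=
  R m s x = 0 ∨ R m s x = 1 ∨ R m s x = 2 ∨ R m s x = s ∨ R m s x = s+1 ∨ R m s x = s+2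

def rowA (s t : ℕ) : ℕ :=
  2*s*(t/3) + (if t % 3 = 0 then 0 else if t % 3 = 1 then s+1 else 2)

def rowD (s t : ℕ) : ℕ := if t % 3 = 2 then s - 2 else 1

def Grow (m s : ℕ) (t : ℕ) : ZMod m → ZMod 2 :=
  Pi.single ((rowA s t : ZMod m)) 1 + Pi.single (((rowA s t + rowD s t : ℕ) : ZMod m)) 1

def target (m s : ℕ) (i : ZMod m) : ZMod m :=
  if R m s i = 0 ∨ R m s i = s+1 then i + ((1:ℕ) : ZMod m)
  else if R m s i = 1 ∨ R m s i = s then i - ((s:ℕ) : ZMod m)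
  else if R m s i < s then i + ((s - R m s i : ℕ) : ZMod m)
  else i - ((R m s i - 2 : ℕ) : ZMod m)

section Arith

variable {m s q : ℕ} (hs : 5 ≤ s) (hq : 2 ≤ q) (hmq : m = 2*s*q)

include hs hq hmq
set_option linter.unusedSectionVars false

lemma m_ge : 4*s ≤ m := by subst hmq; nlinarith

lemma haveNeZero : NeZero m := ⟨by have := m_ge hs hq hmq; omega⟩

variable [NeZero m]


omit hq hmq in
lemma R_lt (x : ZMod m) : R m s x < 2*s := Nat.mod_lt _ (by omega)

omit hs hq hmq in
lemma castval (x : ZMod m) : ((x.val : ℕ) : ZMod m) = x := by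
  simp [ZMod.natCast_val, ZMod.cast_id]

lemma R_add_nat (x : ZMod m) (c : ℕ) : R m s (x + (c:ℕ)) = (R m s x + c) % (2*s) := by
  have hdvd : 2*s ∣ m := ⟨q, hmq⟩
  unfold R
  rw [ZMod.val_add, Nat.mod_mod_of_dvd _ hdvd, ZMod.val_natCast,
    Nat.add_mod, Nat.mod_mod_of_dvd _ hdvd]
  conv_rhs => rw [Nat.add_mod, Nat.mod_mod_of_dvd _ (dvd_refl (2*s))]

omit hs hq hmq in
lemma sub_cast (x : ZMod m) (c : ℕ) (hc : c ≤ m) :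
    x - (c:ℕ) = x + ((m - c : ℕ) : ZMod m) := by
  have : ((m - c : ℕ) : ZMod m) = -(c : ZMod m) := by
    rw [Nat.cast_sub hc, ZMod.natCast_self]; ring
  rw [this]; ring

lemma msub_mod (c : ℕ) (hc0 : 0 < c) (hc : c ≤ 2*s) : (m - c) % (2*s) = 2*s - c := by
  obtain ⟨q', rfl⟩ : ∃ q', q = q' + 1 := ⟨q - 1, by omega⟩
  have h1 : m - c = 2*s*q' + (2*s - c) := by
    subst hmq; rw [Nat.mul_add]; generalize 2*s*q' = X; omega
  rw [h1, Nat.mul_add_mod, Nat.mod_eq_of_lt (by omega)]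

lemma R_sub_nat (x : ZMod m) (c : ℕ) (hc0 : 0 < c) (hc : c ≤ 2*s) :
    R m s (x - (c:ℕ)) = (R m s x + (2*s - c)) % (2*s) := by
  rw [sub_cast x c (by have := m_ge hs hq hmq; omega),
    R_add_nat hs hq hmq, Nat.add_mod, msub_mod hs hq hmq c hc0 hc,
    Nat.mod_eq_of_lt (R_lt hs x)]

omit hq hmq in
lemma mod2s_small {a : ℕ} (h : a < 2*s) : a % (2*s) = a := Nat.mod_eq_of_lt h

omit hs hq hmq in
lemma mod2s_mid {a : ℕ} (h1 : 2*s ≤ a) (h2 : a < 2*s + 2*s) : a % (2*s) = a - 2*s := by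
  rw [Nat.mod_eq_sub_mod h1, Nat.mod_eq_of_lt (by omega)]

omit hs hq hmq in
lemma cast_ne_zero {c : ℕ} (h0 : 0 < c) (hcm : c < m) : ((c:ℕ) : ZMod m) ≠ 0 := by
  rw [Ne, ZMod.natCast_eq_zero_iff]
  intro hd
  exact absurd (Nat.le_of_dvd h0 hd) (by omega)

omit hs hq hmq in
lemma partner_of0 {x : ZMod m} (h : R m s x = 0) :
    partner m s x = x + ((1:ℕ) : ZMod m) := by
  unfold partner; rw [if_pos (Or.inl h)]

omit hq hmq in
lemma partner_ofs1 {x : ZMod m} (h : R m s x = s+1) :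
    partner m s x = x + ((1:ℕ) : ZMod m) := by
  unfold partner; rw [if_pos (Or.inr h)]

omit hq hmq in
lemma partner_of1 {x : ZMod m} (h : R m s x = 1) :
    partner m s x = x - ((1:ℕ) : ZMod m) := by
  unfold partner; rw [if_neg (by omega), if_pos (Or.inl h)]

omit hq hmq in
lemma partner_ofs2 {x : ZMod m} (h : R m s x = s+2) :
    partner m s x = x - ((1:ℕ) : ZMod m) := by
  unfold partner; rw [if_neg (by omega), if_pos (Or.inr h)]

omit hq hmq in
lemma partner_of2 {x : ZMod m} (h : R m s x = 2) :
    partner m s x = x + ((s-2:ℕ) : ZMod m) := by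
  unfold partner; rw [if_neg (by omega), if_neg (by omega), if_pos h]

omit hq hmq in
lemma partner_ofs {x : ZMod m} (h : R m s x = s) :
    partner m s x = x - ((s-2:ℕ) : ZMod m) := by
  unfold partner; rw [if_neg (by omega), if_neg (by omega), if_neg (by omega), if_pos h]

omit hq hmq in
lemma partner_of_not {x : ZMod m} (h : ¬ isSP m s x) : partner m s x = x := by
  unfold partner
  unfold isSP at h
  rw [if_neg (by tauto), if_neg (by tauto), if_neg (by tauto), if_neg (by tauto)]

lemma R_partner0 {x : ZMod m} (h : R m s x = 0) : R m s (partner m s x) = 1 := by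
  rw [partner_of0 h, R_add_nat hs hq hmq, h]
  exact mod2s_small hs (by omega)

lemma R_partner1 {x : ZMod m} (h : R m s x = 1) : R m s (partner m s x) = 0 := by
  rw [partner_of1 hs h, R_sub_nat hs hq hmq x 1 one_pos (by omega), h,
    show 1 + (2*s - 1) = 2*s by omega, Nat.mod_self]

lemma R_partner2 {x : ZMod m} (h : R m s x = 2) : R m s (partner m s x) = s := by
  rw [partner_of2 hs h, R_add_nat hs hq hmq, h, show 2 + (s-2) = s by omega]
  exact mod2s_small hs (by omega)

lemma R_partners {x : ZMod m} (h : R m s x = s) : R m s (partner m s x) = 2 := by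
  rw [partner_ofs hs h, R_sub_nat hs hq hmq x (s-2) (by omega) (by omega), h,
    show s + (2*s - (s-2)) = 2*s + 2 by omega, mod2s_mid (by omega) (by omega)]
  omega

lemma R_partners1 {x : ZMod m} (h : R m s x = s+1) : R m s (partner m s x) = s+2 := by
  rw [partner_ofs1 hs h, R_add_nat hs hq hmq, h]
  exact mod2s_small hs (by omega)

lemma R_partners2 {x : ZMod m} (h : R m s x = s+2) : R m s (partner m s x) = s+1 := by
  rw [partner_ofs2 hs h, R_sub_nat hs hq hmq x 1 one_pos (by omega), h,
    show s + 2 + (2*s - 1) = 2*s + (s+1) by omega, mod2s_mid (by omega) (by omega)]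
  omega

lemma isSP_partner {x : ZMod m} (h : isSP m s x) : isSP m s (partner m s x) := by
  unfold isSP
  rcases h with h|h|h|h|h|h
  · rw [R_partner0 hs hq hmq h]; tauto
  · rw [R_partner1 hs hq hmq h]; tauto
  · rw [R_partner2 hs hq hmq h]; tauto
  · rw [R_partners hs hq hmq h]; tauto
  · rw [R_partners1 hs hq hmq h]; tauto
  · rw [R_partners2 hs hq hmq h]; tauto

lemma partner_partner (x : ZMod m) : partner m s (partner m s x) = x := by
  by_cases h : isSP m s x
  · rcases h with h|h|h|h|h|h
    · rw [partner_of1 hs (R_partner0 hs hq hmq h), partner_of0 h, add_sub_cancel_right]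
    · rw [partner_of0 (R_partner1 hs hq hmq h), partner_of1 hs h, sub_add_cancel]
    · rw [partner_ofs hs (R_partner2 hs hq hmq h), partner_of2 hs h, add_sub_cancel_right]
    · rw [partner_of2 hs (R_partners hs hq hmq h), partner_ofs hs h, sub_add_cancel]
    · rw [partner_ofs2 hs (R_partners1 hs hq hmq h), partner_ofs1 hs h, add_sub_cancel_right]
    · rw [partner_ofs1 hs (R_partners2 hs hq hmq h), partner_ofs2 hs h, sub_add_cancel]
  · rw [partner_of_not hs (by rw [partner_of_not hs h]; exact h), partner_of_not hs h]

lemma partner_ne {x : ZMod m} (h : isSP m s x) : partner m s x ≠ x := by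
  have hm4 := m_ge hs hq hmq
  have h1 : ((1:ℕ) : ZMod m) ≠ 0 := cast_ne_zero one_pos (by omega)
  have h2 : ((s-2:ℕ) : ZMod m) ≠ 0 := cast_ne_zero (by omega) (by omega)
  rcases h with h|h|h|h|h|h
  · rw [partner_of0 h]; intro hc; exact h1 (by linear_combination hc)
  · rw [partner_of1 hs h]; intro hc; exact h1 (by linear_combination -hc)
  · rw [partner_of2 hs h]; intro hc; exact h2 (by linear_combination hc)
  · rw [partner_ofs hs h]; intro hc; exact h2 (by linear_combination -hc)
  · rw [partner_ofs1 hs h]; intro hc; exact h1 (by linear_combination hc)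
  · rw [partner_ofs2 hs h]; intro hc; exact h1 (by linear_combination -hc)

end Arith


section Rows

variable {m s q : ℕ} (hs : 5 ≤ s) (hq : 2 ≤ q) (hmq : m = 2*s*q)
include hs hq hmq
set_option linter.unusedSectionVars false

variable [NeZero m]

lemma mem_sideInfo {i x : ZMod m} :
    x ∈ SDPicod.sideInfo m s i ↔ (i - x).val < s := by
  have hm4 := m_ge hs hq hmq
  constructor
  · rintro ⟨k, hk, rfl⟩
    rw [Finset.mem_range] at hk
    rw [sub_sub_cancel, ZMod.val_natCast_of_lt (by omega)]
    exact hk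
  · intro h
    exact ⟨(i - x).val, Finset.mem_range.mpr h, by rw [castval, sub_sub_cancel]⟩

lemma row_bound {t : ℕ} (ht : t < 3*q) : 2*s*(t/3) + 2*s ≤ m := by
  have hk : t/3 + 1 ≤ q := by omega
  have h2 : 2*s*(t/3 + 1) ≤ 2*s*q := Nat.mul_le_mul_left _ hk
  rw [Nat.mul_add, Nat.mul_one] at h2
  rw [hmq]
  exact h2

lemma rowD_pos {t : ℕ} : 0 < rowD s t ∧ rowD s t ≤ 2*s := by
  unfold rowD; split <;> omega

lemma rowsum_lt {t : ℕ} (ht : t < 3*q) : rowA s t + rowD s t < m := by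
  have h1 := row_bound hs hq hmq ht
  have hr : t % 3 = 0 ∨ t % 3 = 1 ∨ t % 3 = 2 := by omega
  rcases hr with hr | hr | hr <;> simp [rowA, rowD, hr] <;> omega

lemma row_structure {t : ℕ} (ht : t < 3*q) :
    isSP m s ((rowA s t : ℕ) : ZMod m) ∧
    partner m s ((rowA s t : ℕ) : ZMod m) = ((rowA s t + rowD s t : ℕ) : ZMod m) := by
  have h1 := row_bound hs hq hmq ht
  have hr : t % 3 = 0 ∨ t % 3 = 1 ∨ t % 3 = 2 := by omega
  have hvala : ((rowA s t : ℕ) : ZMod m).val = rowA s t := by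
    apply ZMod.val_natCast_of_lt
    have := rowsum_lt hs hq hmq ht
    omega
  rcases hr with hr | hr | hr
  · have hA : rowA s t = 2*s*(t/3) := by simp [rowA, hr]
    have hD : rowD s t = 1 := by simp [rowD, hr]
    have hR : R m s ((rowA s t : ℕ) : ZMod m) = 0 := by
      unfold R; rw [hvala, hA, Nat.mul_mod_right]
    refine ⟨Or.inl hR, ?_⟩
    rw [partner_of0 hR, hD]
    push_cast
    ring
  · have hA : rowA s t = 2*s*(t/3) + (s+1) := by simp [rowA, hr]
    have hD : rowD s t = 1 := by simp [rowD, hr]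
    have hR : R m s ((rowA s t : ℕ) : ZMod m) = s+1 := by
      unfold R; rw [hvala, hA, Nat.mul_add_mod, Nat.mod_eq_of_lt (by omega)]
    refine ⟨Or.inr (Or.inr (Or.inr (Or.inr (Or.inl hR)))), ?_⟩
    rw [partner_ofs1 hs hR, hD]
    push_cast
    ring
  · have hA : rowA s t = 2*s*(t/3) + 2 := by simp [rowA, hr]
    have hD : rowD s t = s - 2 := by simp [rowD, hr]
    have hR : R m s ((rowA s t : ℕ) : ZMod m) = 2 := by
      unfold R; rw [hvala, hA, Nat.mul_add_mod, Nat.mod_eq_of_lt (by omega)]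
    refine ⟨Or.inr (Or.inr (Or.inl hR)), ?_⟩
    rw [partner_of2 hs hR, hD]
    push_cast
    ring

lemma row_endpoints_ne {t : ℕ} (ht : t < 3*q) :
    ((rowA s t : ℕ) : ZMod m) ≠ ((rowA s t + rowD s t : ℕ) : ZMod m) := by
  obtain ⟨hSP, hP⟩ := row_structure hs hq hmq ht
  rw [← hP]
  exact fun h => partner_ne hs hq hmq hSP h.symm

lemma Grow_apply_ne {t : ℕ} {x : ZMod m}
    (hx1 : x ≠ ((rowA s t : ℕ) : ZMod m)) (hx2 : x ≠ ((rowA s t + rowD s t : ℕ) : ZMod m)) :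
    Grow m s t x = 0 := by
  unfold Grow
  rw [Pi.add_apply, Pi.single_apply, Pi.single_apply, if_neg hx1, if_neg hx2, add_zero]

lemma Grow_not_SP {t : ℕ} (ht : t < 3*q) {j : ZMod m} (hj : ¬ isSP m s j) :
    Grow m s t j = 0 := by
  obtain ⟨hSP, hP⟩ := row_structure hs hq hmq ht
  apply Grow_apply_ne hs hq hmq
  · rintro rfl; exact hj hSP
  · rintro rfl; rw [← hP] at hj; exact hj (isSP_partner hs hq hmq hSP)

lemma Grow_pair {t : ℕ} (ht : t < 3*q) (c : ZMod m) :
    Grow m s t c + Grow m s t (partner m s c) = 0 := by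
  obtain ⟨hSP, hP⟩ := row_structure hs hq hmq ht
  have hne : ((rowA s t : ℕ) : ZMod m) ≠ ((rowA s t + rowD s t : ℕ) : ZMod m) :=
    row_endpoints_ne hs hq hmq ht
  have e1 : Grow m s t ((rowA s t : ℕ) : ZMod m) = 1 := by
    unfold Grow
    rw [Pi.add_apply, Pi.single_apply, Pi.single_apply, if_pos rfl, if_neg hne, add_zero]
  have e2 : Grow m s t ((rowA s t + rowD s t : ℕ) : ZMod m) = 1 := by
    unfold Grow
    rw [Pi.add_apply, Pi.single_apply, Pi.single_apply, if_neg hne.symm, if_pos rfl, zero_add]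
  have hPb : partner m s ((rowA s t + rowD s t : ℕ) : ZMod m) = ((rowA s t : ℕ) : ZMod m) := by
    rw [← hP, partner_partner hs hq hmq]
  by_cases h1 : c = ((rowA s t : ℕ) : ZMod m)
  · rw [h1, hP, e1, e2]; decide
  · by_cases h2 : c = ((rowA s t + rowD s t : ℕ) : ZMod m)
    · rw [h2, hPb, e1, e2]; decide
    · have h3 : partner m s c ≠ ((rowA s t : ℕ) : ZMod m) := by
        intro h; apply h2
        rw [← partner_partner hs hq hmq c, h, hP]
      have h4 : partner m s c ≠ ((rowA s t + rowD s t : ℕ) : ZMod m) := by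
        intro h; apply h1
        rw [← partner_partner hs hq hmq c, h, hPb]
      rw [Grow_apply_ne hs hq hmq h1 h2, Grow_apply_ne hs hq hmq h3 h4, add_zero]

lemma exists_row_left {t : ℕ} (ht : t < 3*q) {c : ZMod m}
    (hAc : ((rowA s t : ℕ) : ZMod m) = c) :
    Grow m s t = Pi.single c 1 + Pi.single (partner m s c) 1 := by
  obtain ⟨_, hP⟩ := row_structure hs hq hmq ht
  unfold Grow
  rw [← hP, hAc]

lemma exists_row_right {t : ℕ} (ht : t < 3*q) {c : ZMod m}
    (hAc : ((rowA s t : ℕ) : ZMod m) = partner m s c) :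
    Grow m s t = Pi.single c 1 + Pi.single (partner m s c) 1 := by
  rw [exists_row_left hs hq hmq ht hAc, partner_partner hs hq hmq, add_comm]

omit hs hq hmq [NeZero m] in
lemma rowA_3k (k : ℕ) : rowA s (3*k) = 2*s*k := by
  unfold rowA
  rw [show 3*k/3 = k by omega, show (3*k)%3 = 0 by omega]
  simp

omit hs hq hmq [NeZero m] in
lemma rowA_3k1 (k : ℕ) : rowA s (3*k+1) = 2*s*k + (s+1) := by
  unfold rowA
  rw [show (3*k+1)/3 = k by omega, show (3*k+1)%3 = 1 by omega]
  simp

omit hs hq hmq [NeZero m] in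
lemma rowA_3k2 (k : ℕ) : rowA s (3*k+2) = 2*s*k + 2 := by
  unfold rowA
  rw [show (3*k+2)/3 = k by omega, show (3*k+2)%3 = 2 by omega]
  simp

lemma exists_row {c : ZMod m} (hc : isSP m s c) :
    ∃ t, t < 3*q ∧ Grow m s t = Pi.single c 1 + Pi.single (partner m s c) 1 := by
  have hm4 := m_ge hs hq hmq
  have hdm : 2*s*(c.val/(2*s)) + c.val % (2*s) = c.val := Nat.div_add_mod _ _
  have hkq : c.val/(2*s) < q := by
    apply (Nat.div_lt_iff_lt_mul (show 0 < 2*s by omega)).mpr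
    calc c.val < m := ZMod.val_lt c
    _ = q * (2*s) := by rw [hmq]; ring
  rcases hc with h|h|h|h|h|h <;> unfold R at h <;> rw [h] at hdm
  · refine ⟨3*(c.val/(2*s)), by omega, exists_row_left hs hq hmq (by omega) ?_⟩
    rw [rowA_3k, show 2*s*(c.val/(2*s)) = c.val by omega, castval c]
  · refine ⟨3*(c.val/(2*s)), by omega, exists_row_right hs hq hmq (by omega) ?_⟩
    rw [partner_of1 hs h]
    apply eq_sub_of_add_eq
    rw [rowA_3k, ← Nat.cast_add, hdm, castval c]
  · refine ⟨3*(c.val/(2*s))+2, by omega, exists_row_left hs hq hmq (by omega) ?_⟩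
    rw [rowA_3k2, hdm, castval c]
  · refine ⟨3*(c.val/(2*s))+2, by omega, exists_row_right hs hq hmq (by omega) ?_⟩
    rw [partner_ofs hs h]
    apply eq_sub_of_add_eq
    rw [rowA_3k2, ← Nat.cast_add, add_assoc, show 2 + (s-2) = s by omega, hdm, castval c]
  · refine ⟨3*(c.val/(2*s))+1, by omega, exists_row_left hs hq hmq (by omega) ?_⟩
    rw [rowA_3k1, hdm, castval c]
  · refine ⟨3*(c.val/(2*s))+1, by omega, exists_row_right hs hq hmq (by omega) ?_⟩
    rw [partner_ofs2 hs h]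
    apply eq_sub_of_add_eq
    rw [rowA_3k1, ← Nat.cast_add, add_assoc, show s+1+1 = s+2 by omega, hdm, castval c]

lemma row_decentral {t : ℕ} (ht : t < 3*q) :
    ∃ i : ZMod m, Function.support (Grow m s t) ⊆ SDPicod.sideInfo m s i := by
  refine ⟨((rowA s t + rowD s t : ℕ) : ZMod m), ?_⟩
  intro x hx
  have hx' : x = ((rowA s t : ℕ) : ZMod m) ∨ x = ((rowA s t + rowD s t : ℕ) : ZMod m) := by
    by_contra hcon
    push_neg at hcon
    exact hx (Grow_apply_ne hs hq hmq hcon.1 hcon.2)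
  have hD := rowD_pos (m := m) (q := q) hs hq hmq (t := t)
  rcases hx' with rfl | rfl
  · refine ⟨rowD s t, Finset.mem_range.mpr ?_, ?_⟩
    · have : rowD s t = 1 ∨ rowD s t = s - 2 := by unfold rowD; split <;> simp
      omega
    · push_cast
      ring
  · exact ⟨0, Finset.mem_range.mpr (by omega), by push_cast; ring⟩

end Rows

/-- the code -/
def G0 (m s q : ℕ) : Fin (3*q) → ZMod m → ZMod 2 := fun t => Grow m s t.val

section Span

variable {m s q : ℕ} (hs : 5 ≤ s) (hq : 2 ≤ q) (hmq : m = 2*s*q)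
include hs hq hmq
set_option linter.unusedSectionVars false

variable [NeZero m]

lemma decentral : SDPicod.IsDecentralizedCode m s (G0 m s q) :=
  fun t => row_decentral hs hq hmq t.isLt

lemma gens_def (i : ZMod m) :
    (Set.range (G0 m s q) ∪ {v | ∃ k ∈ SDPicod.sideInfo m s i, v = Pi.single k (1 : ZMod 2)}) =
    (Set.range (G0 m s q) ∪ {v | ∃ k ∈ SDPicod.sideInfo m s i, v = Pi.single k (1 : ZMod 2)}) := rfl

lemma span_vanish_pair {i c : ZMod m}
    (hc : c ∉ SDPicod.sideInfo m s i) (hpc : partner m s c ∉ SDPicod.sideInfo m s i)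
    {v : ZMod m → ZMod 2}
    (hv : v ∈ Submodule.span (ZMod 2)
      (Set.range (G0 m s q) ∪ {w | ∃ k ∈ SDPicod.sideInfo m s i, w = Pi.single k (1 : ZMod 2)})) :
    v c + v (partner m s c) = 0 := by
  set Φ : (ZMod m → ZMod 2) →ₗ[ZMod 2] ZMod 2 :=
    (LinearMap.proj c : (ZMod m → ZMod 2) →ₗ[ZMod 2] ZMod 2) +
    (LinearMap.proj (partner m s c) : (ZMod m → ZMod 2) →ₗ[ZMod 2] ZMod 2) with hΦ
  have hker : (Set.range (G0 m s q) ∪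
      {w | ∃ k ∈ SDPicod.sideInfo m s i, w = Pi.single k (1 : ZMod 2)}) ⊆
      (LinearMap.ker Φ : Submodule (ZMod 2) (ZMod m → ZMod 2)) := by
    rintro w (⟨t, rfl⟩ | ⟨k, hk, rfl⟩) <;> rw [SetLike.mem_coe, LinearMap.mem_ker, hΦ,
      LinearMap.add_apply, LinearMap.proj_apply, LinearMap.proj_apply]
    · exact Grow_pair hs hq hmq t.isLt c
    · have h1 : c ≠ k := fun h => hc (h ▸ hk)
      have h2 : partner m s c ≠ k := fun h => hpc (h ▸ hk)
      rw [Pi.single_apply, Pi.single_apply, if_neg h1, if_neg h2, add_zero]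
  have hle := Submodule.span_le.mpr hker
  have := hle hv
  rw [LinearMap.mem_ker, hΦ, LinearMap.add_apply, LinearMap.proj_apply,
    LinearMap.proj_apply] at this
  exact this

lemma span_vanish_single {i c : ZMod m}
    (hc : c ∉ SDPicod.sideInfo m s i) (hsp : ¬ isSP m s c)
    {v : ZMod m → ZMod 2}
    (hv : v ∈ Submodule.span (ZMod 2)
      (Set.range (G0 m s q) ∪ {w | ∃ k ∈ SDPicod.sideInfo m s i, w = Pi.single k (1 : ZMod 2)})) :
    v c = 0 := by
  set Φ : (ZMod m → ZMod 2) →ₗ[ZMod 2] ZMod 2 := LinearMap.proj c with hΦ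
  have hker : (Set.range (G0 m s q) ∪
      {w | ∃ k ∈ SDPicod.sideInfo m s i, w = Pi.single k (1 : ZMod 2)}) ⊆
      (LinearMap.ker Φ : Submodule (ZMod 2) (ZMod m → ZMod 2)) := by
    rintro w (⟨t, rfl⟩ | ⟨k, hk, rfl⟩) <;> rw [SetLike.mem_coe, LinearMap.mem_ker, hΦ,
      LinearMap.proj_apply]
    · exact Grow_not_SP hs hq hmq t.isLt hsp
    · have h1 : c ≠ k := fun h => hc (h ▸ hk)
      rw [Pi.single_apply, if_neg h1]
  have hle := Submodule.span_le.mpr hker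
  have := hle hv
  rw [LinearMap.mem_ker, hΦ, LinearMap.proj_apply] at this
  exact this

lemma dec_sub {i j : ZMod m} (hj : j ∈ SDPicod.decSet m s (G0 m s q) i) :
    isSP m s j ∧ j ∉ SDPicod.sideInfo m s i ∧ partner m s j ∈ SDPicod.sideInfo m s i := by
  obtain ⟨hjA, hjs⟩ := hj
  have hSP : isSP m s j := by
    by_contra hsp
    have := span_vanish_single hs hq hmq hjA hsp hjs
    rw [Pi.single_apply, if_pos rfl] at this
    exact one_ne_zero this
  refine ⟨hSP, hjA, ?_⟩
  by_contra hp
  have := span_vanish_pair hs hq hmq hjA hp hjs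
  rw [Pi.single_apply, Pi.single_apply, if_pos rfl,
    if_neg (partner_ne hs hq hmq hSP), add_zero] at this
  exact one_ne_zero this

lemma dec_mem {i j : ZMod m} (hSP : isSP m s j) (hjA : j ∉ SDPicod.sideInfo m s i)
    (hp : partner m s j ∈ SDPicod.sideInfo m s i) :
    j ∈ SDPicod.decSet m s (G0 m s q) i := by
  refine ⟨hjA, ?_⟩
  obtain ⟨t, ht, hG⟩ := exists_row hs hq hmq hSP
  have h1 : Grow m s t ∈ Submodule.span (ZMod 2)
      (Set.range (G0 m s q) ∪ {w | ∃ k ∈ SDPicod.sideInfo m s i, w = Pi.single k (1 : ZMod 2)}) :=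
    Submodule.subset_span (Or.inl ⟨⟨t, ht⟩, rfl⟩)
  have h2 : Pi.single (partner m s j) (1 : ZMod 2) ∈ Submodule.span (ZMod 2)
      (Set.range (G0 m s q) ∪ {w | ∃ k ∈ SDPicod.sideInfo m s i, w = Pi.single k (1 : ZMod 2)}) :=
    Submodule.subset_span (Or.inr ⟨partner m s j, hp, rfl⟩)
  have h3 := Submodule.add_mem _ h1 h2
  have h4 : Grow m s t + Pi.single (partner m s j) (1 : ZMod 2) = Pi.single j 1 := by
    rw [hG, add_assoc, ← two_smul (ZMod 2), show (2 : ZMod 2) = 0 by decide, zero_smul, add_zero]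
  rwa [h4] at h3

end Span

section Main

variable {m s q : ℕ} (hs : 5 ≤ s) (hq : 2 ≤ q) (hmq : m = 2*s*q)
include hs hq hmq
set_option linter.unusedSectionVars false

variable [NeZero m]

lemma notA_iff {i x : ZMod m} :
    x ∉ SDPicod.sideInfo m s i ↔ s ≤ (i - x).val := by
  rw [mem_sideInfo hs hq hmq, not_lt]

lemma val_sub_add (i : ZMod m) (c : ℕ) (h0 : 0 < c) (hcm : c ≤ m) :
    (i - (i + (c:ℕ))).val = m - c := by
  have h1 : i - (i + (c:ℕ)) = ((m - c : ℕ) : ZMod m) := by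
    rw [Nat.cast_sub hcm, ZMod.natCast_self]
    ring
  rw [h1, ZMod.val_natCast_of_lt (by omega)]

lemma val_sub_sub (i : ZMod m) (c : ℕ) (hcm : c < m) :
    (i - (i - (c:ℕ))).val = c := by
  rw [sub_sub_cancel, ZMod.val_natCast_of_lt hcm]

lemma target_spec (i : ZMod m) :
    isSP m s (target m s i) ∧ target m s i ∉ SDPicod.sideInfo m s i ∧
      partner m s (target m s i) ∈ SDPicod.sideInfo m s i := by
  have hm4 := m_ge hs hq hmq
  have hRlt := R_lt hs i
  by_cases h1 : R m s i = 0 ∨ R m s i = s+1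
  · have htar : target m s i = i + ((1:ℕ) : ZMod m) := by unfold target; rw [if_pos h1]
    have hRt : R m s (target m s i) = 1 ∨ R m s (target m s i) = s+2 := by
      rw [htar, R_add_nat hs hq hmq]
      rcases h1 with h | h <;> rw [h]
      · left; exact mod2s_small hs (by omega)
      · right; exact mod2s_small hs (by omega)
    have hpt : partner m s (target m s i) = i := by
      rcases hRt with h | h
      · rw [partner_of1 hs h, htar, add_sub_cancel_right]
      · rw [partner_ofs2 hs h, htar, add_sub_cancel_right]
    refine ⟨by unfold isSP; tauto, ?_, ?_⟩
    · rw [notA_iff hs hq hmq, htar, val_sub_add hs hq hmq i 1 one_pos (by omega)]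
      omega
    · rw [hpt, mem_sideInfo hs hq hmq, sub_self, ZMod.val_zero]
      omega
  · by_cases h2 : R m s i = 1 ∨ R m s i = s
    · have htar : target m s i = i - ((s:ℕ) : ZMod m) := by
        unfold target; rw [if_neg h1, if_pos h2]
      have hRt : R m s (target m s i) = s+1 ∨ R m s (target m s i) = 0 := by
        rw [htar, R_sub_nat hs hq hmq i s (by omega) (by omega)]
        rcases h2 with h | h <;> rw [h]
        · left; rw [show 1 + (2*s - s) = s + 1 by omega]; exact mod2s_small hs (by omega)
        · right; rw [show s + (2*s - s) = 2*s by omega, Nat.mod_self]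
      have hpt : partner m s (target m s i) = i - (((s:ℕ) - 1 : ℕ) : ZMod m) := by
        have haux : target m s i + ((1:ℕ) : ZMod m) = i - (((s:ℕ) - 1 : ℕ) : ZMod m) := by
          rw [htar, Nat.cast_sub (by omega : 1 ≤ s)]
          ring
        rcases hRt with h | h
        · rw [partner_ofs1 hs h, haux]
        · rw [partner_of0 h, haux]
      refine ⟨by unfold isSP; tauto, ?_, ?_⟩
      · rw [notA_iff hs hq hmq, htar, val_sub_sub hs hq hmq i s (by omega)]
      · rw [hpt, mem_sideInfo hs hq hmq, val_sub_sub hs hq hmq i (s-1) (by omega)]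
        omega
    · by_cases h3 : R m s i < s
      · have hu2 : 2 ≤ R m s i := by omega
        have htar : target m s i = i + ((s - R m s i : ℕ) : ZMod m) := by
          unfold target; rw [if_neg h1, if_neg h2, if_pos h3]
        have hRt : R m s (target m s i) = s := by
          rw [htar, R_add_nat hs hq hmq, show R m s i + (s - R m s i) = s by omega]
          exact mod2s_small hs (by omega)
        have hpt : partner m s (target m s i) = i - ((R m s i - 2 : ℕ) : ZMod m) := by
          rw [partner_ofs hs hRt, htar]
          have hcast : ((s - R m s i : ℕ) : ZMod m) + ((R m s i - 2 : ℕ) : ZMod m)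
              = ((s - 2 : ℕ) : ZMod m) := by
            rw [← Nat.cast_add, show (s - R m s i) + (R m s i - 2) = s - 2 by omega]
          linear_combination hcast
        refine ⟨by unfold isSP; tauto, ?_, ?_⟩
        · rw [notA_iff hs hq hmq, htar, val_sub_add hs hq hmq i (s - R m s i) (by omega) (by omega)]
          omega
        · rw [hpt, mem_sideInfo hs hq hmq, val_sub_sub hs hq hmq i (R m s i - 2) (by omega)]
          omega
      · have hu : s + 2 ≤ R m s i := by omega
        have htar : target m s i = i - ((R m s i - 2 : ℕ) : ZMod m) := by
          unfold target; rw [if_neg h1, if_neg h2, if_neg h3]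
        have hRt : R m s (target m s i) = 2 := by
          rw [htar, R_sub_nat hs hq hmq i (R m s i - 2) (by omega) (by omega),
            show R m s i + (2*s - (R m s i - 2)) = 2*s + 2 by omega,
            mod2s_mid (by omega) (by omega)]
          omega
        have hpt : partner m s (target m s i) = i - ((R m s i - s : ℕ) : ZMod m) := by
          rw [partner_of2 hs hRt, htar]
          have hcast : ((R m s i - s : ℕ) : ZMod m) + ((s - 2 : ℕ) : ZMod m)
              = ((R m s i - 2 : ℕ) : ZMod m) := by
            rw [← Nat.cast_add, show (R m s i - s) + (s - 2) = R m s i - 2 by omega]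
          linear_combination hcast
        refine ⟨by unfold isSP; tauto, ?_, ?_⟩
        · rw [notA_iff hs hq hmq, htar, val_sub_sub hs hq hmq i (R m s i - 2) (by omega)]
          omega
        · rw [hpt, mem_sideInfo hs hq hmq, val_sub_sub hs hq hmq i (R m s i - s) (by omega)]
          omega

lemma T_unique {i j : ZMod m} (hSP : isSP m s j) (hjA : j ∉ SDPicod.sideInfo m s i)
    (hp : partner m s j ∈ SDPicod.sideInfo m s i) : j = target m s i := by
  have hm4 := m_ge hs hq hmq
  set d := (i - j).val with hdd
  have hdcast : ((d:ℕ) : ZMod m) = i - j := castval (i - j)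
  have hdm : d < m := ZMod.val_lt (i - j)
  have hd : s ≤ d := (notA_iff hs hq hmq).mp hjA
  have hij : i = j + ((d:ℕ) : ZMod m) := by rw [hdcast]; ring
  have hR : R m s i = (R m s j + d) % (2*s) := by
    have := R_add_nat hs hq hmq j d
    rw [← hij] at this
    exact this
  rw [mem_sideInfo hs hq hmq] at hp
  have hRj := R_lt hs j
  rcases hSP with h|h|h|h|h|h
  · -- R j = 0, partner = j + 1, d = s, R i = s
    rw [partner_of0 h] at hp
    have hc : i - (j + ((1:ℕ) : ZMod m)) = ((d - 1 : ℕ) : ZMod m) := by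
      rw [Nat.cast_sub (by omega : 1 ≤ d)]
      linear_combination - hdcast
    rw [hc, ZMod.val_natCast_of_lt (by omega)] at hp
    have hds : d = s := by omega
    have hRi : R m s i = s := by
      rw [hR, h, hds, Nat.zero_add]; exact mod2s_small hs (by omega)
    have htar : target m s i = i - ((s:ℕ) : ZMod m) := by
      unfold target; rw [if_neg (by omega), if_pos (Or.inr hRi)]
    rw [htar]
    rw [hds] at hij
    linear_combination - hij
  · -- R j = 1, partner = j - 1, d = m - 1, R i = 0
    rw [partner_of1 hs h] at hp
    have hc : i - (j - ((1:ℕ) : ZMod m)) = ((d + 1 : ℕ) : ZMod m) := by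
      push_cast
      linear_combination - hdcast
    rw [hc, ZMod.val_natCast] at hp
    have hd1 : d + 1 = m := by
      rcases Nat.lt_or_ge (d+1) m with hlt | hge
      · rw [Nat.mod_eq_of_lt hlt] at hp; omega
      · omega
    have hRi : R m s i = 0 := by
      rw [hR, h, show 1 + d = m by omega, hmq, Nat.mul_mod_right]
    have htar : target m s i = i + ((1:ℕ) : ZMod m) := by
      unfold target; rw [if_pos (Or.inl hRi)]
    rw [htar]
    have hcast : ((d:ℕ) : ZMod m) + ((1:ℕ) : ZMod m) = 0 := by
      rw [← Nat.cast_add, hd1, ZMod.natCast_self]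
    linear_combination - hij - hcast
  · -- R j = 2, partner = j + (s-2), d ∈ [s, 2s-3], R i = d + 2
    rw [partner_of2 hs h] at hp
    have hc : i - (j + ((s - 2 : ℕ) : ZMod m)) = ((d - (s - 2) : ℕ) : ZMod m) := by
      rw [Nat.cast_sub (by omega : s - 2 ≤ d)]
      linear_combination - hdcast
    rw [hc, ZMod.val_natCast_of_lt (by omega)] at hp
    have hd2 : d ≤ 2*s - 3 := by omega
    have hRi : R m s i = d + 2 := by
      rw [hR, h, show 2 + d = d + 2 by omega]; exact mod2s_small hs (by omega)
    have htar : target m s i = i - ((d : ℕ) : ZMod m) := by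
      unfold target
      rw [if_neg (by omega), if_neg (by omega), if_neg (by omega), hRi,
        show d + 2 - 2 = d by omega]
    rw [htar]
    linear_combination - hij
  · -- R j = s, partner = j - (s-2), d ≥ m - s + 2
    rw [partner_ofs hs h] at hp
    have hc : i - (j - ((s - 2 : ℕ) : ZMod m)) = ((d + (s - 2) : ℕ) : ZMod m) := by
      push_cast
      linear_combination - hdcast
    rw [hc, ZMod.val_natCast] at hp
    have hdge : m ≤ d + (s - 2) := by
      rcases Nat.lt_or_ge (d + (s-2)) m with hlt | hge
      · rw [Nat.mod_eq_of_lt hlt] at hp; omega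
      · exact hge
    rw [Nat.mod_eq_sub_mod hdge, Nat.mod_eq_of_lt (by omega)] at hp
    set e := d - (m - 2*s) with he
    have hel : s + 2 ≤ e := by omega
    have heu : e ≤ 2*s - 1 := by omega
    have h2s : m - 2*s = 2*s*(q-1) := by
      obtain ⟨q', rfl⟩ : ∃ q', q = q' + 1 := ⟨q-1, by omega⟩
      rw [hmq, Nat.add_sub_cancel, Nat.mul_add, Nat.mul_one, Nat.add_sub_cancel]
    have hRi : R m s i = e - s := by
      rw [hR, h, show s + d = (m - 2*s) + (s + e) by omega, h2s, Nat.mul_add_mod,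
        mod2s_mid (by omega) (by omega)]
      omega
    have htar : target m s i = i + ((s - R m s i : ℕ) : ZMod m) := by
      unfold target
      rw [if_neg (by omega), if_neg (by omega), if_pos (by omega)]
    rw [htar, hRi, show s - (e - s) = 2*s - e by omega]
    have hcast : ((d:ℕ) : ZMod m) + ((2*s - e : ℕ) : ZMod m) = 0 := by
      rw [← Nat.cast_add, show d + (2*s - e) = m by omega, ZMod.natCast_self]
    linear_combination - hij - hcast
  · -- R j = s+1, partner = j+1, d = s, R i = 1
    rw [partner_ofs1 hs h] at hp
    have hc : i - (j + ((1:ℕ) : ZMod m)) = ((d - 1 : ℕ) : ZMod m) := by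
      rw [Nat.cast_sub (by omega : 1 ≤ d)]
      linear_combination - hdcast
    rw [hc, ZMod.val_natCast_of_lt (by omega)] at hp
    have hds : d = s := by omega
    have hRi : R m s i = 1 := by
      rw [hR, h, hds, show s + 1 + s = 2*s + 1 by omega, mod2s_mid (by omega) (by omega)]
      omega
    have htar : target m s i = i - ((s:ℕ) : ZMod m) := by
      unfold target; rw [if_neg (by omega), if_pos (Or.inl hRi)]
    rw [htar]
    rw [hds] at hij
    linear_combination - hij
  · -- R j = s+2, partner = j - 1, d = m-1, R i = s+1
    rw [partner_ofs2 hs h] at hp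
    have hc : i - (j - ((1:ℕ) : ZMod m)) = ((d + 1 : ℕ) : ZMod m) := by
      push_cast
      linear_combination - hdcast
    rw [hc, ZMod.val_natCast] at hp
    have hd1 : d + 1 = m := by
      rcases Nat.lt_or_ge (d+1) m with hlt | hge
      · rw [Nat.mod_eq_of_lt hlt] at hp; omega
      · omega
    have hRi : R m s i = s+1 := by
      rw [hR, h, show s + 2 + d = m + (s + 1) by omega, hmq, Nat.mul_add_mod]
      exact mod2s_small hs (by omega)
    have htar : target m s i = i + ((1:ℕ) : ZMod m) := by
      unfold target; rw [if_pos (Or.inr hRi)]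
    rw [htar]
    have hcast : ((d:ℕ) : ZMod m) + ((1:ℕ) : ZMod m) = 0 := by
      rw [← Nat.cast_add, hd1, ZMod.natCast_self]
    linear_combination - hij - hcast

end Main

end SDP2

open SDPicod

theorem feasible_two_s_dvd_m (m s : ℕ) (hs : 5 ≤ s) (hm : 4 * s ≤ m)
    (hdvd : 2 * s ∣ m) :
    ∃ G : Fin (3 * m / (2 * s)) → ZMod m → ZMod 2,
      IsDecentralizedCode m s G ∧ Correct m s G ∧ Secure m s G := by
  obtain ⟨q, hmq⟩ := hdvd
  have hq : 2 ≤ q := by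
    by_contra hcon
    push_neg at hcon
    interval_cases q <;> omega
  haveI : NeZero m := ⟨by omega⟩
  have hlen : 3 * m / (2*s) = 3*q := by
    rw [hmq, show 3*(2*s*q) = (2*s)*(3*q) by ring]
    exact Nat.mul_div_cancel_left _ (by omega)
  rw [hlen]
  refine ⟨SDP2.G0 m s q, SDP2.decentral hs hq hmq, ?_, ?_⟩
  · intro i
    obtain ⟨h1, h2, h3⟩ := SDP2.target_spec hs hq hmq i
    exact ⟨_, SDP2.dec_mem hs hq hmq h1 h2 h3⟩
  · intro i j1 hj1 j2 hj2
    obtain ⟨a1, b1, c1⟩ := SDP2.dec_sub hs hq hmq hj1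
    obtain ⟨a2, b2, c2⟩ := SDP2.dec_sub hs hq hmq hj2
    rw [SDP2.T_unique hs hq hmq a1 b1 c1, SDP2.T_unique hs hq hmq a2 b2 c2]
end
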